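/- arXiv:1809.02376 — 4 statements merged into one kernel-verified Lean document; each statement's English description precedes it below -/
import Mathlib

section
/- If a metric space (M, d) embeds with distortion α into a k-dimensional normed space, then M is (4α+1)^k-doubling: every ball in M of radius r can be covered by at most (4α+1)^k balls of radius r/2. -/
open Metric MeasureTheory ENNReal

/-- If a metric space embeds with distortion α into a k-dimensional normed
space, then it is (4α+1)^k-doubling. -/
theorem doubling_of_embedding (M : Type*) [MetricSpace M] (k : ℕ)
    (X : Type*) [NormedAddCommGroup X] [NormedSpace ℝ X] [FiniteDimensional ℝ X]
    (hX : Module.finrank ℝ X = k) (α : ℝ) (hα : 1 ≤ α) (f : M → X)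
    (hf : ∀ u v : M, dist u v ≤ ‖f u - f v‖ ∧ ‖f u - f v‖ ≤ α * dist u v) :
    ∀ (x : M) (r : ℝ), 0 ≤ r →
      ∃ s : Finset M, (s.card : ℝ) ≤ (4 * α + 1) ^ k ∧
        Metric.closedBall x r ⊆ ⋃ y ∈ s, Metric.closedBall y (r / 2) := by
  classical
  intro x r hr
  have hα0 : (0 : ℝ) < α := lt_of_lt_of_le zero_lt_one hα
  have hbase : (1 : ℝ) ≤ 4 * α + 1 := by nlinarith
  -- Key counting lemma: any (r/2)-separated subset of the ball has card ≤ (4α+1)^k.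
  have key : ∀ s : Finset M, (↑s ⊆ Metric.closedBall x r) →
      (∀ a ∈ s, ∀ b ∈ s, a ≠ b → r / 2 < dist a b) →
      (s.card : ℝ) ≤ (4 * α + 1) ^ k := by
    intro s hsub hsep
    rcases eq_or_lt_of_le hr with hr0 | hrpos
    · -- r = 0 : the ball is a single point
      have : s.card ≤ 1 := by
        rcases s.eq_empty_or_nonempty with rfl | ⟨a, ha⟩
        · simp
        · apply Finset.card_le_one.2
          intro b hb c hc
          have hb' := hsub hb
          have hc' := hsub hc
          rw [← hr0, Metric.mem_closedBall, dist_le_zero] at hb' hc'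
          rw [hb', hc']
      calc (s.card : ℝ) ≤ 1 := by exact_mod_cast this
        _ ≤ (4 * α + 1) ^ k := one_le_pow₀ hbase
    · -- r > 0 : volume argument in X
      borelize X
      let μ : Measure X := Measure.addHaar
      have hq : (0 : ℝ) < r / 4 := by linarith
      have hρ : (0 : ℝ) < α * r + r / 4 := by nlinarith
      set A := ⋃ u ∈ s, closedBall (f u) (r / 4) with hA
      have D : Set.Pairwise (s : Set M) (Function.onFun Disjoint fun u => closedBall (f u) (r / 4)) := by
        rintro a ha b hb hab
        apply closedBall_disjoint_closedBall
        have h1 : r / 2 < dist a b := hsep a ha b hb hab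
        have h2 : dist a b ≤ ‖f a - f b‖ := (hf a b).1
        rw [dist_eq_norm]
        linarith
      have A_subset : A ⊆ closedBall (f x) (α * r + r / 4) := by
        refine Set.iUnion₂_subset fun u hu => ?_
        apply closedBall_subset_closedBall'
        have h1 : ‖f u - f x‖ ≤ α * dist u x := (hf u x).2
        have h2 : dist u x ≤ r := hsub hu
        rw [dist_eq_norm]
        nlinarith
      have I : (s.card : ℝ≥0∞) * ENNReal.ofReal ((r / 4) ^ k) * μ (closedBall 0 1) ≤
          ENNReal.ofReal ((α * r + r / 4) ^ k) * μ (closedBall 0 1) := by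
        calc (s.card : ℝ≥0∞) * ENNReal.ofReal ((r / 4) ^ k) * μ (closedBall 0 1) = μ A := by
              rw [hA, measure_biUnion_finset D fun c _ => measurableSet_closedBall]
              simp only [μ.addHaar_closedBall' _ hq.le, hX]
              simp [Finset.sum_const, mul_assoc]
          _ ≤ μ (closedBall (f x) (α * r + r / 4)) := measure_mono A_subset
          _ = ENNReal.ofReal ((α * r + r / 4) ^ k) * μ (closedBall 0 1) := by
              rw [μ.addHaar_closedBall' _ hρ.le, hX]
      have Vpos : 0 < μ (closedBall (0 : X) 1) :=
        lt_of_lt_of_le (measure_ball_pos _ _ zero_lt_one)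
          (measure_mono ball_subset_closedBall)
      have Vlt : μ (closedBall (0 : X) 1) < ⊤ := measure_closedBall_lt_top
      have J : (s.card : ℝ≥0∞) * ENNReal.ofReal ((r / 4) ^ k) ≤
          ENNReal.ofReal ((α * r + r / 4) ^ k) :=
        (ENNReal.mul_le_mul_iff_left Vpos.ne' Vlt.ne).1 I
      have J' : ENNReal.ofReal ((s.card : ℝ) * (r / 4) ^ k) ≤
          ENNReal.ofReal ((α * r + r / 4) ^ k) := by
        rwa [ENNReal.ofReal_mul (by positivity), ENNReal.ofReal_natCast]
      have K : (s.card : ℝ) * (r / 4) ^ k ≤ (α * r + r / 4) ^ k :=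
        le_trans (le_of_eq (ENNReal.toReal_ofReal (by positivity)).symm)
          (ENNReal.toReal_le_of_le_ofReal (by positivity) J')
      have heq : (α * r + r / 4) ^ k = (4 * α + 1) ^ k * (r / 4) ^ k := by
        rw [← mul_pow]; ring_nf
      rw [heq] at K
      exact le_of_mul_le_mul_right K (pow_pos hq k)
  -- Now take a separated subset of maximal cardinality.
  set N : Set ℕ := {n | ∃ s : Finset M, (↑s ⊆ Metric.closedBall x r) ∧
    (∀ a ∈ s, ∀ b ∈ s, a ≠ b → r / 2 < dist a b) ∧ s.card = n} with hN
  have hNne : N.Nonempty := ⟨0, ∅, by simp⟩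
  have hNbdd : BddAbove N := by
    refine ⟨⌊(4 * α + 1) ^ k⌋₊, fun n hn => ?_⟩
    obtain ⟨s, h1, h2, h3⟩ := hn
    exact Nat.le_floor (h3 ▸ key s h1 h2)
  obtain ⟨s, hsub, hsep, hcard⟩ := Nat.sSup_mem hNne hNbdd
  refine ⟨s, key s hsub hsep, ?_⟩
  intro z hz
  by_contra hzc
  simp only [Set.mem_iUnion, Metric.mem_closedBall, not_exists] at hzc
  push_neg at hzc
  have hzs : z ∉ s := fun h => absurd (hzc z h) (by simp [div_nonneg hr])
  have hsep' : ∀ a ∈ insert z s, ∀ b ∈ insert z s, a ≠ b → r / 2 < dist a b := by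
    intro a ha b hb hab
    rcases Finset.mem_insert.1 ha with rfl | ha' <;>
      rcases Finset.mem_insert.1 hb with rfl | hb'
    · exact absurd rfl hab
    · exact hzc b hb'
    · rw [dist_comm]; exact hzc a ha'
    · exact hsep a ha' b hb' hab
  have hsub' : ↑(insert z s) ⊆ Metric.closedBall x r := by
    intro a ha
    rcases Finset.mem_insert.1 ha with rfl | ha'
    · exact hz
    · exact hsub ha'
  have : s.card + 1 ∈ N := ⟨insert z s, hsub', hsep', by
    rw [Finset.card_insert_of_notMem hzs]⟩
  have : s.card + 1 ≤ sSup N := le_csSup hNbdd this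
  omega
end

section
/- Subadditivity of p-th roots of nonlinear Rayleigh quotients under matrix multiplication: with the notation above, for row-stochastic matrices A, B both reversible with respect to π and any x ∈ Mⁿ with not all coordinates equal, R(x; AB, d^p)^{1/p} ≤ R(x; A, d^p)^{1/p} + R(x; B, d^p)^{1/p}. Consequently, for every t ∈ ℕ, R(x; A^t, d^p) ≤ t^p R(x; A, d^p). -/
open scoped BigOperators

/-- The nonlinear Rayleigh quotient R(x; A, d^p). -/
noncomputable def rayleighQuotient {n : ℕ} (π : Fin n → ℝ)
    (A : Matrix (Fin n) (Fin n) ℝ) {M : Type*} [MetricSpace M] (p : ℝ)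
    (x : Fin n → M) : ℝ :=
  (∑ i, ∑ j, π i * A i j * dist (x i) (x j) ^ p) /
    (∑ i, ∑ j, π i * π j * dist (x i) (x j) ^ p)

/-- Numerator of the Rayleigh quotient. -/
noncomputable def rnum {n : ℕ} (π : Fin n → ℝ)
    (A : Matrix (Fin n) (Fin n) ℝ) {M : Type*} [MetricSpace M] (p : ℝ)
    (x : Fin n → M) : ℝ :=
  ∑ i, ∑ j, π i * A i j * dist (x i) (x j) ^ p

lemma rnum_nonneg {n : ℕ} {π : Fin n → ℝ} {A : Matrix (Fin n) (Fin n) ℝ}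
    {M : Type*} [MetricSpace M] {p : ℝ} {x : Fin n → M}
    (hπ : ∀ i, 0 ≤ π i) (hA : ∀ i j, 0 ≤ A i j) : 0 ≤ rnum π A p x := by
  refine Finset.sum_nonneg fun i _ => Finset.sum_nonneg fun j _ => ?_
  have hd : (0:ℝ) ≤ dist (x i) (x j) ^ p := Real.rpow_nonneg dist_nonneg p
  have h1 := hπ i
  have h2 := hA i j
  positivity

/-- Key Minkowski-type inequality for the numerators. -/
lemma rnum_mul_le {n : ℕ} (π : Fin n → ℝ)
    (hπpos : ∀ i, 0 < π i)
    (A B : Matrix (Fin n) (Fin n) ℝ)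
    (hA0 : ∀ i j, 0 ≤ A i j) (hA1 : ∀ i, ∑ j, A i j = 1)
    (hArev : ∀ i j, π i * A i j = π j * A j i)
    (hB0 : ∀ i j, 0 ≤ B i j) (hB1 : ∀ i, ∑ j, B i j = 1)
    (M : Type*) [MetricSpace M] (p : ℝ) (hp : 1 ≤ p)
    (x : Fin n → M) :
    rnum π (A * B) p x ^ (1 / p) ≤ rnum π A p x ^ (1 / p) + rnum π B p x ^ (1 / p) := by
  have hp0 : (0:ℝ) < p := lt_of_lt_of_le one_pos hp
  have hpne : p ≠ 0 := hp0.ne'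
  set μ : Fin n × Fin n × Fin n → ℝ := fun t => π t.1 * A t.1 t.2.1 * B t.2.1 t.2.2 with hμdef
  have hμ : ∀ t, 0 ≤ μ t := fun t =>
    mul_nonneg (mul_nonneg (hπpos t.1).le (hA0 _ _)) (hB0 _ _)
  set F : Fin n × Fin n × Fin n → ℝ := fun t => μ t ^ (1/p) * dist (x t.1) (x t.2.1) with hFdef
  set G : Fin n × Fin n × Fin n → ℝ := fun t => μ t ^ (1/p) * dist (x t.2.1) (x t.2.2) with hGdef
  have hF : ∀ t, 0 ≤ F t := fun t => mul_nonneg (Real.rpow_nonneg (hμ t) _) dist_nonneg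
  have hG : ∀ t, 0 ≤ G t := fun t => mul_nonneg (Real.rpow_nonneg (hμ t) _) dist_nonneg
  have hμpow : ∀ t, (μ t ^ (1/p)) ^ p = μ t := by
    intro t
    rw [one_div, Real.rpow_inv_rpow (hμ t) hpne]
  -- Step 1: rewrite the numerator of the product as a sum over triples
  have step1 : (∑ t : Fin n × Fin n × Fin n, μ t * dist (x t.1) (x t.2.2) ^ p)
      = rnum π (A * B) p x := by
    unfold rnum
    rw [Fintype.sum_prod_type]
    refine Finset.sum_congr rfl fun i _ => ?_
    rw [Fintype.sum_prod_type, Finset.sum_comm]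
    refine Finset.sum_congr rfl fun j _ => ?_
    simp only [Matrix.mul_apply, Finset.sum_mul, Finset.mul_sum]
    refine Finset.sum_congr rfl fun k _ => ?_
    simp only [hμdef]
    ring
  -- the F-sum equals rnum of A
  have hFsum : ∑ t : Fin n × Fin n × Fin n, F t ^ p = rnum π A p x := by
    have h1 : ∀ t : Fin n × Fin n × Fin n, F t ^ p = μ t * dist (x t.1) (x t.2.1) ^ p := by
      intro t
      simp only [hFdef]
      rw [Real.mul_rpow (Real.rpow_nonneg (hμ t) _) dist_nonneg, hμpow]
    simp only [h1, hμdef]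
    rw [Fintype.sum_prod_type]
    unfold rnum
    refine Finset.sum_congr rfl fun i _ => ?_
    rw [Fintype.sum_prod_type]
    refine Finset.sum_congr rfl fun k _ => ?_
    have : (∑ j, π i * A i k * B k j * dist (x i) (x k) ^ p)
        = (π i * A i k * dist (x i) (x k) ^ p) * ∑ j, B k j := by
      rw [Finset.mul_sum]
      exact Finset.sum_congr rfl fun j _ => by ring
    rw [this, hB1 k, mul_one]
  -- reversibility collapses the G-sum to rnum of B
  have hπA : ∀ k, ∑ i, π i * A i k = π k := by
    intro k
    calc ∑ i, π i * A i k = ∑ i, π k * A k i :=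
          Finset.sum_congr rfl fun i _ => hArev i k
      _ = π k := by rw [← Finset.mul_sum, hA1, mul_one]
  have hGsum : ∑ t : Fin n × Fin n × Fin n, G t ^ p = rnum π B p x := by
    have h1 : ∀ t : Fin n × Fin n × Fin n, G t ^ p = μ t * dist (x t.2.1) (x t.2.2) ^ p := by
      intro t
      simp only [hGdef]
      rw [Real.mul_rpow (Real.rpow_nonneg (hμ t) _) dist_nonneg, hμpow]
    simp only [h1, hμdef]
    simp only [Fintype.sum_prod_type]
    rw [Finset.sum_comm]
    unfold rnum
    refine Finset.sum_congr rfl fun k _ => ?_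
    rw [Finset.sum_comm]
    refine Finset.sum_congr rfl fun j _ => ?_
    have : (∑ i, π i * A i k * B k j * dist (x k) (x j) ^ p)
        = (∑ i, π i * A i k) * (B k j * dist (x k) (x j) ^ p) := by
      rw [Finset.sum_mul]
      exact Finset.sum_congr rfl fun i _ => by ring
    rw [this, hπA k]
    ring
  -- pointwise triangle inequality
  have hbound : rnum π (A * B) p x ≤ ∑ t : Fin n × Fin n × Fin n, (F t + G t) ^ p := by
    rw [← step1]
    refine Finset.sum_le_sum fun t _ => ?_
    have htri : dist (x t.1) (x t.2.2) ≤ dist (x t.1) (x t.2.1) + dist (x t.2.1) (x t.2.2) :=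
      dist_triangle _ _ _
    have h2 : dist (x t.1) (x t.2.2) ^ p
        ≤ (dist (x t.1) (x t.2.1) + dist (x t.2.1) (x t.2.2)) ^ p :=
      Real.rpow_le_rpow dist_nonneg htri hp0.le
    have h3 : (F t + G t) ^ p
        = μ t * (dist (x t.1) (x t.2.1) + dist (x t.2.1) (x t.2.2)) ^ p := by
      have hsum : F t + G t
          = μ t ^ (1/p) * (dist (x t.1) (x t.2.1) + dist (x t.2.1) (x t.2.2)) := by
        simp only [hFdef, hGdef]; ring
      rw [hsum, Real.mul_rpow (Real.rpow_nonneg (hμ t) _)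
        (add_nonneg dist_nonneg dist_nonneg), hμpow]
    rw [h3]
    exact mul_le_mul_of_nonneg_left h2 (hμ t)
  -- Minkowski's inequality
  have mink := Real.Lp_add_le_of_nonneg (s := (Finset.univ : Finset (Fin n × Fin n × Fin n)))
    (f := F) (g := G) hp (fun i _ => hF i) (fun i _ => hG i)
  have hABnn : 0 ≤ rnum π (A * B) p x := by
    refine rnum_nonneg (fun i => (hπpos i).le) (fun i j => ?_)
    rw [Matrix.mul_apply]
    exact Finset.sum_nonneg fun k _ => mul_nonneg (hA0 i k) (hB0 k j)
  calc rnum π (A * B) p x ^ (1 / p)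
      ≤ (∑ t : Fin n × Fin n × Fin n, (F t + G t) ^ p) ^ (1 / p) :=
        Real.rpow_le_rpow hABnn hbound (by positivity)
    _ ≤ (∑ t : Fin n × Fin n × Fin n, F t ^ p) ^ (1 / p)
        + (∑ t : Fin n × Fin n × Fin n, G t ^ p) ^ (1 / p) := mink
    _ = rnum π A p x ^ (1 / p) + rnum π B p x ^ (1 / p) := by rw [hFsum, hGsum]

/-- Subadditivity of p-th roots of nonlinear Rayleigh quotients under matrix
multiplication, and the consequence R(x; A^t, d^p) ≤ t^p R(x; A, d^p). -/
theorem rayleighQuotient_rpow_inv_subadditive {n : ℕ} (π : Fin n → ℝ)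
    (hπpos : ∀ i, 0 < π i) (hπ1 : ∑ i, π i = 1)
    (A B : Matrix (Fin n) (Fin n) ℝ)
    (hA0 : ∀ i j, 0 ≤ A i j) (hA1 : ∀ i, ∑ j, A i j = 1)
    (hArev : ∀ i j, π i * A i j = π j * A j i)
    (hB0 : ∀ i j, 0 ≤ B i j) (hB1 : ∀ i, ∑ j, B i j = 1)
    (hBrev : ∀ i j, π i * B i j = π j * B j i)
    (M : Type*) [MetricSpace M] (p : ℝ) (hp : 1 ≤ p)
    (x : Fin n → M) (hx : ∃ i j, x i ≠ x j) :
    rayleighQuotient π (A * B) p x ^ (1 / p) ≤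
        rayleighQuotient π A p x ^ (1 / p) + rayleighQuotient π B p x ^ (1 / p) ∧
      ∀ t : ℕ, rayleighQuotient π (A ^ t) p x ≤
        (t : ℝ) ^ p * rayleighQuotient π A p x := by
  have hp0 : (0:ℝ) < p := lt_of_lt_of_le one_pos hp
  have hpne : p ≠ 0 := hp0.ne'
  set D : ℝ := ∑ i, ∑ j, π i * π j * dist (x i) (x j) ^ p with hDdef
  have hterm_nn : ∀ i j : Fin n, 0 ≤ π i * π j * dist (x i) (x j) ^ p := by
    intro i j
    have hd : (0:ℝ) ≤ dist (x i) (x j) ^ p := Real.rpow_nonneg dist_nonneg p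
    have h1 := (hπpos i).le
    have h2 := (hπpos j).le
    positivity
  have hD : 0 < D := by
    obtain ⟨i0, j0, hij⟩ := hx
    have hterm : 0 < π i0 * π j0 * dist (x i0) (x j0) ^ p :=
      mul_pos (mul_pos (hπpos i0) (hπpos j0)) (Real.rpow_pos_of_pos (dist_pos.2 hij) p)
    calc (0:ℝ) < π i0 * π j0 * dist (x i0) (x j0) ^ p := hterm
      _ ≤ ∑ j, π i0 * π j * dist (x i0) (x j) ^ p :=
          Finset.single_le_sum (fun j _ => hterm_nn i0 j) (Finset.mem_univ j0)
      _ ≤ D :=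
          Finset.single_le_sum
            (fun i _ => Finset.sum_nonneg fun j _ => hterm_nn i j) (Finset.mem_univ i0)
  have hRQ : ∀ C : Matrix (Fin n) (Fin n) ℝ,
      rayleighQuotient π C p x = rnum π C p x / D := fun C => rfl
  have hnnA : 0 ≤ rnum π A p x := rnum_nonneg (fun i => (hπpos i).le) hA0
  have hnnB : 0 ≤ rnum π B p x := rnum_nonneg (fun i => (hπpos i).le) hB0
  have hAB0 : ∀ i j, 0 ≤ (A * B) i j := by
    intro i j
    rw [Matrix.mul_apply]
    exact Finset.sum_nonneg fun k _ => mul_nonneg (hA0 i k) (hB0 k j)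
  have hnnAB : 0 ≤ rnum π (A * B) p x := rnum_nonneg (fun i => (hπpos i).le) hAB0
  have key := rnum_mul_le π hπpos A B hA0 hA1 hArev hB0 hB1 M p hp x
  constructor
  · rw [hRQ (A * B), hRQ A, hRQ B, Real.div_rpow hnnAB hD.le, Real.div_rpow hnnA hD.le,
      Real.div_rpow hnnB hD.le, ← add_div]
    exact (div_le_div_iff_of_pos_right (Real.rpow_pos_of_pos hD (1/p))).2 key
  · -- powers of A are nonnegative, stochastic and reversible
    have hpow0 : ∀ t : ℕ, ∀ i j, 0 ≤ (A ^ t) i j := by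
      intro t
      induction t with
      | zero =>
        intro i j
        rw [pow_zero]
        rcases eq_or_ne i j with h | h
        · subst h; simp [Matrix.one_apply]
        · simp [Matrix.one_apply, h]
      | succ t ih =>
        intro i j
        rw [pow_succ, Matrix.mul_apply]
        exact Finset.sum_nonneg fun k _ => mul_nonneg (ih i k) (hA0 k j)
    have hpow1 : ∀ t : ℕ, ∀ i, ∑ j, (A ^ t) i j = 1 := by
      intro t
      induction t with
      | zero => intro i; simp [Matrix.one_apply]
      | succ t ih =>
        intro i
        simp only [pow_succ, Matrix.mul_apply]
        rw [Finset.sum_comm]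
        have h1 : ∀ k : Fin n, (∑ j, (A ^ t) i k * A k j) = (A ^ t) i k := by
          intro k; rw [← Finset.mul_sum, hA1, mul_one]
        calc (∑ k, ∑ j, (A ^ t) i k * A k j) = ∑ k, (A ^ t) i k :=
              Finset.sum_congr rfl fun k _ => h1 k
          _ = 1 := ih i
    have hpowrev : ∀ t : ℕ, ∀ i j, π i * (A ^ t) i j = π j * (A ^ t) j i := by
      intro t
      induction t with
      | zero =>
        intro i j
        rw [pow_zero]
        rcases eq_or_ne i j with h | h
        · subst h; rfl
        · simp [Matrix.one_apply, h, h.symm]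
      | succ t ih =>
        intro i j
        have h1 : π i * (A ^ (t+1)) i j = π j * (A * A ^ t) j i := by
          rw [pow_succ, Matrix.mul_apply, Finset.mul_sum, Matrix.mul_apply, Finset.mul_sum]
          refine Finset.sum_congr rfl fun k _ => ?_
          calc π i * ((A ^ t) i k * A k j) = (π i * (A ^ t) i k) * A k j := by ring
            _ = (π k * (A ^ t) k i) * A k j := by rw [ih i k]
            _ = (π k * A k j) * (A ^ t) k i := by ring
            _ = (π j * A j k) * (A ^ t) k i := by rw [hArev k j]
            _ = π j * (A j k * (A ^ t) k i) := by ring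
        rw [h1, ← pow_succ']
    -- inductive bound on the p-th roots of numerators
    have En : ∀ t : ℕ, rnum π (A ^ t) p x ^ (1/p) ≤ (t : ℝ) * rnum π A p x ^ (1/p) := by
      intro t
      induction t with
      | zero =>
        have h0 : rnum π (A ^ 0) p x = 0 := by
          unfold rnum
          simp only [pow_zero]
          refine Finset.sum_eq_zero fun i _ => Finset.sum_eq_zero fun j _ => ?_
          rcases eq_or_ne i j with h | h
          · subst h; simp [Real.zero_rpow hpne]
          · simp [Matrix.one_apply, h]
        rw [h0, Real.zero_rpow (one_div_ne_zero hpne)]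
        simp
      | succ t ih =>
        have key2 := rnum_mul_le π hπpos (A ^ t) A (hpow0 t) (hpow1 t) (hpowrev t)
          hA0 hA1 M p hp x
        rw [← pow_succ] at key2
        calc rnum π (A ^ (t+1)) p x ^ (1/p)
            ≤ rnum π (A ^ t) p x ^ (1/p) + rnum π A p x ^ (1/p) := key2
          _ ≤ (t : ℝ) * rnum π A p x ^ (1/p) + rnum π A p x ^ (1/p) :=
              add_le_add_left ih _
          _ = ((t + 1 : ℕ) : ℝ) * rnum π A p x ^ (1/p) := by push_cast; ring
    intro t
    have hnnt : 0 ≤ rnum π (A ^ t) p x := rnum_nonneg (fun i => (hπpos i).le) (hpow0 t)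
    have h1 : rnum π (A ^ t) p x ≤ (t : ℝ) ^ p * rnum π A p x := by
      have h2 := Real.rpow_le_rpow (Real.rpow_nonneg hnnt _) (En t) hp0.le
      rw [one_div, Real.rpow_inv_rpow hnnt hpne,
        Real.mul_rpow (Nat.cast_nonneg t) (Real.rpow_nonneg hnnA _),
        Real.rpow_inv_rpow hnnA hpne] at h2
      exact h2
    rw [hRQ (A ^ t), hRQ A, ← mul_div_assoc]
    exact (div_le_div_iff_of_pos_right hD).2 h1
end

section
/- Point-wise Rayleigh quotient estimate for Hilbert isomorphs: let X be a normed space and ‖·‖_H a Hilbertian norm on X with ‖y‖_H ≤ ‖y‖_X ≤ d‖y‖_H for all y ∈ X, for some d ≥ 1. Let π be a probability measure on {1,…,n} and A a row-stochastic matrix reversible with respect to π. For x ∈ Xⁿ with not all coordinates equal, let t(x; A) be the minimal t ∈ ℕ such that R(x; ((1/2)Id + (1/2)A)^{2t}, ‖·‖_H²) ≥ 1 − 1/(4d²). If t(x; A) < ∞, then 1/R(x; A, ‖·‖_X²) ≤ C · t(x; A)² for a universal constant C. -/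
open scoped BigOperators

/-- The Hilbertian Rayleigh quotient of the (2t)-th power of the lazy matrix
(1/2)Id + (1/2)A, evaluated at a configuration y of points of a Hilbert space. -/
noncomputable def lazyPowerRayleigh (n : ℕ) (π : Fin n → ℝ)
    (A : Matrix (Fin n) (Fin n) ℝ) {H : Type*} [NormedAddCommGroup H]
    [InnerProductSpace ℝ H] (y : Fin n → H) (t : ℕ) : ℝ :=
  (∑ i, ∑ j, π i *
      ((((1 / 2 : ℝ) • (1 : Matrix (Fin n) (Fin n) ℝ) + (1 / 2 : ℝ) • A) ^ (2 * t)) i j) *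
      ‖y i - y j‖ ^ 2) /
    (∑ i, ∑ j, π i * π j * ‖y i - y j‖ ^ 2)


open Finset

lemma csW {ι : Type*} [Fintype ι] (w f : ι → ℝ) (hw : ∀ i, 0 ≤ w i) :
    (∑ i, w i * f i) ^ 2 ≤ (∑ i, w i) * ∑ i, w i * f i ^ 2 := by
  have h := Finset.sum_mul_sq_le_sq_mul_sq univ (fun i => Real.sqrt (w i))
    (fun i => Real.sqrt (w i) * f i)
  have e1 : ∀ i ∈ univ, Real.sqrt (w i) * (Real.sqrt (w i) * f i) = w i * f i := by
    intro i _; rw [← mul_assoc, Real.mul_self_sqrt (hw i)]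
  have e2 : ∀ i ∈ univ, Real.sqrt (w i) ^ 2 = w i := fun i _ => Real.sq_sqrt (hw i)
  have e3 : ∀ i ∈ univ, (Real.sqrt (w i) * f i) ^ 2 = w i * f i ^ 2 := by
    intro i _; rw [mul_pow, Real.sq_sqrt (hw i)]
  rw [sum_congr rfl e1, sum_congr rfl e2, sum_congr rfl e3] at h
  exact h

lemma csInner {ι : Type*} [Fintype ι] (w a b : ι → ℝ) (hw : ∀ i, 0 ≤ w i) :
    ∑ i, w i * (a i * b i) ≤
      Real.sqrt (∑ i, w i * a i ^ 2) * Real.sqrt (∑ i, w i * b i ^ 2) := by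
  have h := Finset.sum_mul_sq_le_sq_mul_sq univ (fun i => Real.sqrt (w i) * a i)
    (fun i => Real.sqrt (w i) * b i)
  have e1 : ∀ i ∈ univ, (Real.sqrt (w i) * a i) * (Real.sqrt (w i) * b i)
      = w i * (a i * b i) := by
    intro i _; rw [mul_mul_mul_comm, Real.mul_self_sqrt (hw i)]
  have e2 : ∀ i ∈ univ, (Real.sqrt (w i) * a i) ^ 2 = w i * a i ^ 2 := by
    intro i _; rw [mul_pow, Real.sq_sqrt (hw i)]
  have e3 : ∀ i ∈ univ, (Real.sqrt (w i) * b i) ^ 2 = w i * b i ^ 2 := by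
    intro i _; rw [mul_pow, Real.sq_sqrt (hw i)]
  rw [sum_congr rfl e1, sum_congr rfl e2, sum_congr rfl e3] at h
  have ha : (0:ℝ) ≤ ∑ i, w i * a i ^ 2 :=
    sum_nonneg fun i _ => mul_nonneg (hw i) (sq_nonneg _)
  have hb : (0:ℝ) ≤ ∑ i, w i * b i ^ 2 :=
    sum_nonneg fun i _ => mul_nonneg (hw i) (sq_nonneg _)
  calc ∑ i, w i * (a i * b i) ≤ |∑ i, w i * (a i * b i)| := le_abs_self _
    _ = Real.sqrt ((∑ i, w i * (a i * b i)) ^ 2) := (Real.sqrt_sq_eq_abs _).symm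
    _ ≤ Real.sqrt ((∑ i, w i * a i ^ 2) * ∑ i, w i * b i ^ 2) := Real.sqrt_le_sqrt h
    _ = Real.sqrt (∑ i, w i * a i ^ 2) * Real.sqrt (∑ i, w i * b i ^ 2) := Real.sqrt_mul ha _

lemma minkW {ι : Type*} [Fintype ι] (w a b : ι → ℝ) (hw : ∀ i, 0 ≤ w i) :
    ∑ i, w i * (a i + b i) ^ 2 ≤
      (Real.sqrt (∑ i, w i * a i ^ 2) + Real.sqrt (∑ i, w i * b i ^ 2)) ^ 2 := by
  have ha : (0:ℝ) ≤ ∑ i, w i * a i ^ 2 :=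
    sum_nonneg fun i _ => mul_nonneg (hw i) (sq_nonneg _)
  have hb : (0:ℝ) ≤ ∑ i, w i * b i ^ 2 :=
    sum_nonneg fun i _ => mul_nonneg (hw i) (sq_nonneg _)
  have key := csInner w a b hw
  calc ∑ i, w i * (a i + b i) ^ 2
      = ∑ i, (w i * a i ^ 2 + 2 * (w i * (a i * b i)) + w i * b i ^ 2) := by
        apply sum_congr rfl; intro i _; ring
    _ = (∑ i, w i * a i ^ 2) + 2 * (∑ i, w i * (a i * b i)) + ∑ i, w i * b i ^ 2 := by
        rw [sum_add_distrib, sum_add_distrib, mul_sum]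
    _ ≤ (∑ i, w i * a i ^ 2) + 2 * (Real.sqrt (∑ i, w i * a i ^ 2) * Real.sqrt (∑ i, w i * b i ^ 2)) + ∑ i, w i * b i ^ 2 := by
        nlinarith [key]
    _ = (Real.sqrt (∑ i, w i * a i ^ 2) + Real.sqrt (∑ i, w i * b i ^ 2)) ^ 2 := by
        rw [add_sq, Real.sq_sqrt ha, Real.sq_sqrt hb]; ring


section MatLemmas
variable {n : ℕ} (π : Fin n → ℝ) (P : Matrix (Fin n) (Fin n) ℝ)

lemma stationary (hrow : ∀ i, ∑ j, P i j = 1)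
    (hrev : ∀ i j, π i * P i j = π j * P j i) (j : Fin n) :
    ∑ i, π i * P i j = π j := by
  calc ∑ i, π i * P i j = ∑ i, π j * P j i := by
        exact sum_congr rfl fun i _ => hrev i j
    _ = π j * ∑ i, P j i := by rw [mul_sum]
    _ = π j := by rw [hrow j, mul_one]

lemma pow_row_sum (hrow : ∀ i, ∑ j, P i j = 1) (m : ℕ) (i : Fin n) :
    ∑ j, (P ^ m) i j = 1 := by
  induction m generalizing i with
  | zero => simp [Matrix.one_apply]
  | succ m ih =>
    rw [pow_succ]
    calc ∑ j, (P ^ m * P) i j = ∑ j, ∑ k, (P ^ m) i k * P k j := by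
          exact sum_congr rfl fun j _ => Matrix.mul_apply
      _ = ∑ k, (P ^ m) i k * ∑ j, P k j := by rw [sum_comm]; exact sum_congr rfl fun k _ => (mul_sum _ _ _).symm
      _ = ∑ k, (P ^ m) i k := by exact sum_congr rfl fun k _ => by rw [hrow k, mul_one]
      _ = 1 := ih i

lemma pow_entry_nonneg (h0 : ∀ i j, 0 ≤ P i j) (m : ℕ) (i j : Fin n) :
    0 ≤ (P ^ m) i j := by
  induction m generalizing i j with
  | zero => simp [Matrix.one_apply]; positivity
  | succ m ih =>
    rw [pow_succ, Matrix.mul_apply]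
    exact sum_nonneg fun k _ => mul_nonneg (ih i k) (h0 k j)

lemma pow_reversible (hrev : ∀ i j, π i * P i j = π j * P j i) (m : ℕ) (i j : Fin n) :
    π i * (P ^ m) i j = π j * (P ^ m) j i := by
  induction m generalizing i j with
  | zero =>
    rcases eq_or_ne i j with h | h
    · simp [h]
    · simp [Matrix.one_apply, h, Ne.symm h]
  | succ m ih =>
    have h1 : π i * (P ^ m * P) i j = π j * (P * P ^ m) j i := by
      rw [Matrix.mul_apply, Matrix.mul_apply, mul_sum, mul_sum]
      apply sum_congr rfl
      intro k _
      calc π i * ((P ^ m) i k * P k j) = (π i * (P ^ m) i k) * P k j := by ring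
        _ = (π k * (P ^ m) k i) * P k j := by rw [ih i k]
        _ = (π k * P k j) * (P ^ m) k i := by ring
        _ = (π j * P j k) * (P ^ m) k i := by rw [hrev k j]
        _ = π j * (P j k * (P ^ m) k i) := by ring
    rw [pow_succ, h1, show P * P ^ m = P ^ m * P from by rw [← pow_succ', ← pow_succ]]
end MatLemmas


lemma chainE {E : Type*} [SeminormedAddCommGroup E] {n : ℕ} (π : Fin n → ℝ)
    (hπ : ∀ i, 0 ≤ π i)
    (P R : Matrix (Fin n) (Fin n) ℝ)
    (hP0 : ∀ i j, 0 ≤ P i j) (hProw : ∀ i, ∑ j, P i j = 1)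
    (hPrev : ∀ i j, π i * P i j = π j * P j i)
    (hR0 : ∀ i j, 0 ≤ R i j) (hRrow : ∀ i, ∑ j, R i j = 1)
    (x : Fin n → E) :
    ∑ i, ∑ j, π i * (P * R) i j * ‖x i - x j‖ ^ 2 ≤
      (Real.sqrt (∑ i, ∑ j, π i * P i j * ‖x i - x j‖ ^ 2) +
       Real.sqrt (∑ i, ∑ j, π i * R i j * ‖x i - x j‖ ^ 2)) ^ 2 := by
  set w : Fin n × Fin n × Fin n → ℝ := fun p => π p.1 * P p.1 p.2.1 * R p.2.1 p.2.2 with hw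
  set a : Fin n × Fin n × Fin n → ℝ := fun p => ‖x p.1 - x p.2.1‖ with hadef
  set b : Fin n × Fin n × Fin n → ℝ := fun p => ‖x p.2.1 - x p.2.2‖ with hbdef
  have hw0 : ∀ p, 0 ≤ w p := fun p =>
    mul_nonneg (mul_nonneg (hπ _) (hP0 _ _)) (hR0 _ _)
  have triple : ∀ f : Fin n → Fin n → Fin n → ℝ,
      (∑ p : Fin n × Fin n × Fin n, f p.1 p.2.1 p.2.2) = ∑ i, ∑ j, ∑ k, f i j k := by
    intro f
    rw [Fintype.sum_prod_type]
    exact sum_congr rfl fun i _ => Fintype.sum_prod_type _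
  have step1 : ∑ i, ∑ j, π i * (P * R) i j * ‖x i - x j‖ ^ 2
      = ∑ p : Fin n × Fin n × Fin n, w p * ‖x p.1 - x p.2.2‖ ^ 2 := by
    rw [triple (fun i j k => π i * P i j * R j k * ‖x i - x k‖ ^ 2)]
    apply sum_congr rfl; intro i _
    rw [sum_comm]
    apply sum_congr rfl; intro k _
    rw [Matrix.mul_apply, mul_sum, sum_mul]
    exact sum_congr rfl fun j _ => by ring
  have stepA : ∑ p : Fin n × Fin n × Fin n, w p * a p ^ 2
      = ∑ i, ∑ j, π i * P i j * ‖x i - x j‖ ^ 2 := by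
    rw [triple (fun i j k => π i * P i j * R j k * ‖x i - x j‖ ^ 2)]
    apply sum_congr rfl; intro i _
    apply sum_congr rfl; intro j _
    calc ∑ k, π i * P i j * R j k * ‖x i - x j‖ ^ 2
        = (π i * P i j * ‖x i - x j‖ ^ 2) * ∑ k, R j k := by
          rw [mul_sum]; exact sum_congr rfl fun k _ => by ring
      _ = π i * P i j * ‖x i - x j‖ ^ 2 := by rw [hRrow j, mul_one]
  have stepB : ∑ p : Fin n × Fin n × Fin n, w p * b p ^ 2
      = ∑ i, ∑ j, π i * R i j * ‖x i - x j‖ ^ 2 := by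
    rw [triple (fun i j k => π i * P i j * R j k * ‖x j - x k‖ ^ 2)]
    rw [sum_comm]
    apply sum_congr rfl; intro j _
    calc ∑ i, ∑ k, π i * P i j * R j k * ‖x j - x k‖ ^ 2
        = ∑ k, ∑ i, π i * P i j * R j k * ‖x j - x k‖ ^ 2 := Finset.sum_comm
      _ = ∑ k, (∑ i, π i * P i j) * (R j k * ‖x j - x k‖ ^ 2) := by
          apply sum_congr rfl; intro k _
          rw [sum_mul]; exact sum_congr rfl fun i _ => by ring
      _ = ∑ k, π j * R j k * ‖x j - x k‖ ^ 2 := by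
          apply sum_congr rfl; intro k _
          rw [stationary π P hProw hPrev j]; ring
  have tri : ∀ p : Fin n × Fin n × Fin n,
      w p * ‖x p.1 - x p.2.2‖ ^ 2 ≤ w p * (a p + b p) ^ 2 := by
    intro p
    apply mul_le_mul_of_nonneg_left _ (hw0 p)
    apply pow_le_pow_left₀ (norm_nonneg _)
    have := dist_triangle (x p.1) (x p.2.1) (x p.2.2)
    simpa [dist_eq_norm] using this
  calc ∑ i, ∑ j, π i * (P * R) i j * ‖x i - x j‖ ^ 2
      = ∑ p : Fin n × Fin n × Fin n, w p * ‖x p.1 - x p.2.2‖ ^ 2 := step1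
    _ ≤ ∑ p : Fin n × Fin n × Fin n, w p * (a p + b p) ^ 2 := sum_le_sum fun p _ => tri p
    _ ≤ (Real.sqrt (∑ p, w p * a p ^ 2) + Real.sqrt (∑ p, w p * b p ^ 2)) ^ 2 :=
        minkW w a b hw0
    _ = _ := by rw [stepA, stepB]

lemma chain_pow {E : Type*} [SeminormedAddCommGroup E] {n : ℕ} (π : Fin n → ℝ)
    (hπ : ∀ i, 0 ≤ π i)
    (P : Matrix (Fin n) (Fin n) ℝ)
    (hP0 : ∀ i j, 0 ≤ P i j) (hProw : ∀ i, ∑ j, P i j = 1)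
    (hPrev : ∀ i j, π i * P i j = π j * P j i)
    (x : Fin n → E) (m : ℕ) :
    Real.sqrt (∑ i, ∑ j, π i * (P ^ m) i j * ‖x i - x j‖ ^ 2) ≤
      m * Real.sqrt (∑ i, ∑ j, π i * P i j * ‖x i - x j‖ ^ 2) := by
  induction m with
  | zero =>
    have h0 : ∑ i, ∑ j, π i * ((P ^ 0 : Matrix (Fin n) (Fin n) ℝ)) i j * ‖x i - x j‖ ^ 2 = 0 := by
      rw [pow_zero]
      apply sum_eq_zero; intro i _
      apply sum_eq_zero; intro j _
      rcases eq_or_ne i j with h | h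
      · simp [h]
      · simp [Matrix.one_apply, h]
    rw [h0, Real.sqrt_zero]
    simp
  | succ m ih =>
    have hbound := chainE π hπ (P ^ m) P (pow_entry_nonneg P hP0 m)
      (pow_row_sum P hProw m) (pow_reversible π P hPrev m) hP0 hProw x
    have hnn : 0 ≤ Real.sqrt (∑ i, ∑ j, π i * (P ^ m) i j * ‖x i - x j‖ ^ 2) +
        Real.sqrt (∑ i, ∑ j, π i * P i j * ‖x i - x j‖ ^ 2) :=
      add_nonneg (Real.sqrt_nonneg _) (Real.sqrt_nonneg _)
    calc Real.sqrt (∑ i, ∑ j, π i * (P ^ (m+1)) i j * ‖x i - x j‖ ^ 2)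
        = Real.sqrt (∑ i, ∑ j, π i * (P ^ m * P) i j * ‖x i - x j‖ ^ 2) := by rw [pow_succ]
      _ ≤ Real.sqrt ((Real.sqrt (∑ i, ∑ j, π i * (P ^ m) i j * ‖x i - x j‖ ^ 2) +
            Real.sqrt (∑ i, ∑ j, π i * P i j * ‖x i - x j‖ ^ 2)) ^ 2) :=
          Real.sqrt_le_sqrt hbound
      _ = Real.sqrt (∑ i, ∑ j, π i * (P ^ m) i j * ‖x i - x j‖ ^ 2) +
            Real.sqrt (∑ i, ∑ j, π i * P i j * ‖x i - x j‖ ^ 2) := by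
          rw [Real.sqrt_sq hnn]
      _ ≤ m * Real.sqrt (∑ i, ∑ j, π i * P i j * ‖x i - x j‖ ^ 2) +
            Real.sqrt (∑ i, ∑ j, π i * P i j * ‖x i - x j‖ ^ 2) :=
          add_le_add ih le_rfl
      _ = (m + 1 : ℕ) * Real.sqrt (∑ i, ∑ j, π i * P i j * ‖x i - x j‖ ^ 2) := by
          push_cast; ring


lemma jensenC {E : Type*} [NormedAddCommGroup E] [NormedSpace ℝ E] {n : ℕ}
    (π : Fin n → ℝ) (hπ : ∀ i, 0 ≤ π i)
    (P : Matrix (Fin n) (Fin n) ℝ)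
    (hP0 : ∀ i j, 0 ≤ P i j) (hProw : ∀ i, ∑ j, P i j = 1)
    (hPrev : ∀ i j, π i * P i j = π j * P j i)
    (x : Fin n → E) :
    ∑ i, π i * ‖∑ j, P i j • x j‖ ^ 2 ≤ ∑ i, π i * ‖x i‖ ^ 2 := by
  have key : ∀ i, ‖∑ j, P i j • x j‖ ^ 2 ≤ ∑ j, P i j * ‖x j‖ ^ 2 := by
    intro i
    have h1 : ‖∑ j, P i j • x j‖ ≤ ∑ j, P i j * ‖x j‖ := by
      refine (norm_sum_le _ _).trans (le_of_eq (sum_congr rfl fun j _ => ?_))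
      rw [norm_smul, Real.norm_eq_abs, abs_of_nonneg (hP0 i j)]
    have h2 : ‖∑ j, P i j • x j‖ ^ 2 ≤ (∑ j, P i j * ‖x j‖) ^ 2 :=
      pow_le_pow_left₀ (norm_nonneg _) h1 2
    refine h2.trans ?_
    have := csW (fun j => P i j) (fun j => ‖x j‖) (hP0 i)
    rwa [hProw i, one_mul] at this
  calc ∑ i, π i * ‖∑ j, P i j • x j‖ ^ 2
      ≤ ∑ i, π i * ∑ j, P i j * ‖x j‖ ^ 2 :=
        sum_le_sum fun i _ => mul_le_mul_of_nonneg_left (key i) (hπ i)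
    _ = ∑ i, ∑ j, π i * P i j * ‖x j‖ ^ 2 := by
        apply sum_congr rfl; intro i _
        rw [mul_sum]; exact sum_congr rfl fun j _ => by ring
    _ = ∑ j, (∑ i, π i * P i j) * ‖x j‖ ^ 2 := by
        rw [sum_comm]
        exact sum_congr rfl fun j _ => (sum_mul _ _ _).symm
    _ = ∑ j, π j * ‖x j‖ ^ 2 :=
        sum_congr rfl fun j _ => by rw [stationary π P hProw hPrev j]

lemma convexityC {E : Type*} [NormedAddCommGroup E] [NormedSpace ℝ E] {n : ℕ}
    (π : Fin n → ℝ) (hπ : ∀ i, 0 ≤ π i)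
    (P : Matrix (Fin n) (Fin n) ℝ)
    (hP0 : ∀ i j, 0 ≤ P i j) (hProw : ∀ i, ∑ j, P i j = 1)
    (x : Fin n → E) :
    ∑ i, π i * ‖x i - ∑ j, P i j • x j‖ ^ 2 ≤
      ∑ i, ∑ j, π i * P i j * ‖x i - x j‖ ^ 2 := by
  have key : ∀ i, ‖x i - ∑ j, P i j • x j‖ ^ 2 ≤ ∑ j, P i j * ‖x i - x j‖ ^ 2 := by
    intro i
    have hrepr : x i - ∑ j, P i j • x j = ∑ j, P i j • (x i - x j) := by
      have : ∑ j, P i j • (x i - x j) = (∑ j, P i j) • x i - ∑ j, P i j • x j := by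
        rw [sum_smul]
        rw [← sum_sub_distrib]
        exact sum_congr rfl fun j _ => smul_sub _ _ _
      rw [this, hProw i, one_smul]
    rw [hrepr]
    have h1 : ‖∑ j, P i j • (x i - x j)‖ ≤ ∑ j, P i j * ‖x i - x j‖ := by
      refine (norm_sum_le _ _).trans (le_of_eq (sum_congr rfl fun j _ => ?_))
      rw [norm_smul, Real.norm_eq_abs, abs_of_nonneg (hP0 i j)]
    have h2 := pow_le_pow_left₀ (norm_nonneg _) h1 2
    refine h2.trans ?_
    have := csW (fun j => P i j) (fun j => ‖x i - x j‖) (hP0 i)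
    rwa [hProw i, one_mul] at this
  calc ∑ i, π i * ‖x i - ∑ j, P i j • x j‖ ^ 2
      ≤ ∑ i, π i * ∑ j, P i j * ‖x i - x j‖ ^ 2 :=
        sum_le_sum fun i _ => mul_le_mul_of_nonneg_left (key i) (hπ i)
    _ = ∑ i, ∑ j, π i * P i j * ‖x i - x j‖ ^ 2 := by
        apply sum_congr rfl; intro i _
        rw [mul_sum]; exact sum_congr rfl fun j _ => by ring

lemma l2triangle {E : Type*} [SeminormedAddCommGroup E] {n : ℕ}
    (π : Fin n → ℝ) (hπ : ∀ i, 0 ≤ π i) (u v : Fin n → E) :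
    Real.sqrt (∑ i, π i * ‖u i‖ ^ 2) ≤
      Real.sqrt (∑ i, π i * ‖u i - v i‖ ^ 2) + Real.sqrt (∑ i, π i * ‖v i‖ ^ 2) := by
  have h1 : ∑ i, π i * ‖u i‖ ^ 2 ≤ ∑ i, π i * (‖u i - v i‖ + ‖v i‖) ^ 2 := by
    apply sum_le_sum; intro i _
    apply mul_le_mul_of_nonneg_left _ (hπ i)
    apply pow_le_pow_left₀ (norm_nonneg _)
    calc ‖u i‖ = ‖(u i - v i) + v i‖ := by rw [sub_add_cancel]
      _ ≤ ‖u i - v i‖ + ‖v i‖ := norm_add_le _ _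
  have h2 := minkW π (fun i => ‖u i - v i‖) (fun i => ‖v i‖) hπ
  have h3 := h1.trans h2
  have hnn : 0 ≤ Real.sqrt (∑ i, π i * ‖u i - v i‖ ^ 2) + Real.sqrt (∑ i, π i * ‖v i‖ ^ 2) :=
    add_nonneg (Real.sqrt_nonneg _) (Real.sqrt_nonneg _)
  calc Real.sqrt (∑ i, π i * ‖u i‖ ^ 2)
      ≤ Real.sqrt ((Real.sqrt (∑ i, π i * ‖u i - v i‖ ^ 2) + Real.sqrt (∑ i, π i * ‖v i‖ ^ 2)) ^ 2) :=
        Real.sqrt_le_sqrt h3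
    _ = _ := Real.sqrt_sq hnn


lemma hilbert_num {H : Type*} [NormedAddCommGroup H] [InnerProductSpace ℝ H] {n : ℕ}
    (π : Fin n → ℝ)
    (B : Matrix (Fin n) (Fin n) ℝ)
    (hBrow : ∀ i, ∑ j, B i j = 1)
    (hBrev : ∀ i j, π i * B i j = π j * B j i)
    (y : Fin n → H) :
    ∑ i, ∑ j, π i * (B * B) i j * ‖y i - y j‖ ^ 2
      = 2 * (∑ i, π i * ‖y i‖ ^ 2) - 2 * ∑ k, π k * ‖∑ i, B k i • y i‖ ^ 2 := by
  have hMrow : ∀ i, ∑ j, (B * B) i j = 1 := by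
    intro i
    have := pow_row_sum B hBrow 2 i
    rwa [pow_two] at this
  have hMrev : ∀ i j, π i * (B * B) i j = π j * (B * B) j i := by
    intro i j
    have := pow_reversible π B hBrev 2 i j
    rwa [pow_two] at this
  have hMstat : ∀ j, ∑ i, π i * (B * B) i j = π j :=
    stationary π (B * B) hMrow hMrev
  have Tcalc : ∑ i, ∑ j, π i * (B * B) i j * (inner ℝ (y i) (y j) : ℝ)
      = ∑ k, π k * ‖∑ i, B k i • y i‖ ^ 2 := by
    calc ∑ i, ∑ j, π i * (B * B) i j * (inner ℝ (y i) (y j) : ℝ)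
        = ∑ i, ∑ j, ∑ k, (π i * B i k) * (B k j * (inner ℝ (y i) (y j) : ℝ)) := by
          apply sum_congr rfl; intro i _
          apply sum_congr rfl; intro j _
          rw [Matrix.mul_apply, mul_sum, sum_mul]
          exact sum_congr rfl fun k _ => by ring
      _ = ∑ i, ∑ k, ∑ j, (π i * B i k) * (B k j * (inner ℝ (y i) (y j) : ℝ)) :=
          sum_congr rfl fun i _ => Finset.sum_comm
      _ = ∑ k, ∑ i, ∑ j, (π i * B i k) * (B k j * (inner ℝ (y i) (y j) : ℝ)) :=
          Finset.sum_comm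
      _ = ∑ k, π k * (inner ℝ (∑ i, B k i • y i) (∑ j, B k j • y j) : ℝ) := by
          apply sum_congr rfl; intro k _
          have hin : (inner ℝ (∑ i, B k i • y i) (∑ j, B k j • y j) : ℝ)
              = ∑ i, ∑ j, B k i * (B k j * (inner ℝ (y i) (y j) : ℝ)) := by
            rw [sum_inner]
            apply sum_congr rfl; intro i _
            rw [real_inner_smul_left, inner_sum, mul_sum]
            exact sum_congr rfl fun j _ => by rw [real_inner_smul_right]
          rw [hin, mul_sum]
          apply sum_congr rfl; intro i _
          rw [mul_sum]
          apply sum_congr rfl; intro j _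
          rw [hBrev i k]; ring
      _ = ∑ k, π k * ‖∑ i, B k i • y i‖ ^ 2 := by
          apply sum_congr rfl; intro k _
          rw [real_inner_self_eq_norm_sq]
  have expand : ∑ i, ∑ j, π i * (B * B) i j * ‖y i - y j‖ ^ 2
      = (∑ i, ∑ j, π i * (B * B) i j * ‖y i‖ ^ 2)
        + (∑ i, ∑ j, π i * (B * B) i j * ‖y j‖ ^ 2)
        - 2 * ∑ i, ∑ j, π i * (B * B) i j * (inner ℝ (y i) (y j) : ℝ) := by
    rw [mul_sum, ← sum_add_distrib, ← sum_sub_distrib]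
    apply sum_congr rfl; intro i _
    rw [mul_sum, ← sum_add_distrib, ← sum_sub_distrib]
    apply sum_congr rfl; intro j _
    rw [norm_sub_sq_real]
    ring
  have A1 : ∑ i, ∑ j, π i * (B * B) i j * ‖y i‖ ^ 2 = ∑ i, π i * ‖y i‖ ^ 2 := by
    apply sum_congr rfl; intro i _
    calc ∑ j, π i * (B * B) i j * ‖y i‖ ^ 2
        = (π i * ‖y i‖ ^ 2) * ∑ j, (B * B) i j := by
          rw [mul_sum]; exact sum_congr rfl fun j _ => by ring
      _ = π i * ‖y i‖ ^ 2 := by rw [hMrow i, mul_one]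
  have A2 : ∑ i, ∑ j, π i * (B * B) i j * ‖y j‖ ^ 2 = ∑ i, π i * ‖y i‖ ^ 2 := by
    rw [sum_comm]
    apply sum_congr rfl; intro j _
    calc ∑ i, π i * (B * B) i j * ‖y j‖ ^ 2
        = (∑ i, π i * (B * B) i j) * ‖y j‖ ^ 2 := (sum_mul _ _ _).symm
      _ = π j * ‖y j‖ ^ 2 := by rw [hMstat j]
  rw [expand, A1, A2, Tcalc]
  ring

lemma hilbert_den {H : Type*} [NormedAddCommGroup H] [InnerProductSpace ℝ H] {n : ℕ}
    (π : Fin n → ℝ) (hsum1 : ∑ i, π i = 1)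
    (y : Fin n → H) (hc : ∑ i, π i • y i = 0) :
    ∑ i, ∑ j, π i * π j * ‖y i - y j‖ ^ 2 = 2 * ∑ i, π i * ‖y i‖ ^ 2 := by
  have Tcalc : ∑ i, ∑ j, π i * π j * (inner ℝ (y i) (y j) : ℝ) = 0 := by
    have hin : (inner ℝ (∑ i, π i • y i) (∑ j, π j • y j) : ℝ)
        = ∑ i, ∑ j, π i * (π j * (inner ℝ (y i) (y j) : ℝ)) := by
      rw [sum_inner]
      apply sum_congr rfl; intro i _
      rw [real_inner_smul_left, inner_sum, mul_sum]
      exact sum_congr rfl fun j _ => by rw [real_inner_smul_right]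
    have h0 : (inner ℝ (∑ i, π i • y i) (∑ j, π j • y j) : ℝ) = 0 := by
      rw [hc, inner_zero_left]
    calc ∑ i, ∑ j, π i * π j * (inner ℝ (y i) (y j) : ℝ)
        = ∑ i, ∑ j, π i * (π j * (inner ℝ (y i) (y j) : ℝ)) :=
          sum_congr rfl fun i _ => sum_congr rfl fun j _ => by ring
      _ = 0 := by rw [← hin, h0]
  have expand : ∑ i, ∑ j, π i * π j * ‖y i - y j‖ ^ 2
      = (∑ i, ∑ j, π i * π j * ‖y i‖ ^ 2)
        + (∑ i, ∑ j, π i * π j * ‖y j‖ ^ 2)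
        - 2 * ∑ i, ∑ j, π i * π j * (inner ℝ (y i) (y j) : ℝ) := by
    rw [mul_sum, ← sum_add_distrib, ← sum_sub_distrib]
    apply sum_congr rfl; intro i _
    rw [mul_sum, ← sum_add_distrib, ← sum_sub_distrib]
    apply sum_congr rfl; intro j _
    rw [norm_sub_sq_real]
    ring
  have A1 : ∑ i, ∑ j, π i * π j * ‖y i‖ ^ 2 = ∑ i, π i * ‖y i‖ ^ 2 := by
    apply sum_congr rfl; intro i _
    calc ∑ j, π i * π j * ‖y i‖ ^ 2 = (π i * ‖y i‖ ^ 2) * ∑ j, π j := by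
          rw [mul_sum]; exact sum_congr rfl fun j _ => by ring
      _ = π i * ‖y i‖ ^ 2 := by rw [hsum1, mul_one]
  have A2 : ∑ i, ∑ j, π i * π j * ‖y j‖ ^ 2 = ∑ i, π i * ‖y i‖ ^ 2 := by
    rw [sum_comm]
    apply sum_congr rfl; intro j _
    calc ∑ i, π i * π j * ‖y j‖ ^ 2 = (∑ i, π i) * (π j * ‖y j‖ ^ 2) := by
          rw [sum_mul]; exact sum_congr rfl fun i _ => by ring
      _ = π j * ‖y j‖ ^ 2 := by rw [hsum1, one_mul]
  rw [expand, A1, A2, Tcalc]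
  ring

set_option maxHeartbeats 1000000 in
/-- Point-wise Rayleigh quotient estimate for Hilbert isomorphs: if t = t(x;A)
is the minimal t with R(x; ((1/2)Id+(1/2)A)^{2t}, ‖·‖_H²) ≥ 1 − 1/(4d²), then
1/R(x; A, ‖·‖_X²) ≤ C t² for a universal constant C. -/
theorem pointwise_rayleigh_estimate :
    ∃ C : ℝ, 0 < C ∧
      ∀ (n : ℕ) (π : Fin n → ℝ), (∀ i, 0 < π i) → (∑ i, π i) = 1 →
      ∀ (A : Matrix (Fin n) (Fin n) ℝ),
        (∀ i j, 0 ≤ A i j) → (∀ i, ∑ j, A i j = 1) →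
        (∀ i j, π i * A i j = π j * A j i) →
      ∀ (X : Type) [NormedAddCommGroup X] [NormedSpace ℝ X]
        (H : Type) [NormedAddCommGroup H] [InnerProductSpace ℝ H]
        (T : X ≃ₗ[ℝ] H) (d : ℝ), 1 ≤ d →
        (∀ y : X, ‖T y‖ ≤ ‖y‖ ∧ ‖y‖ ≤ d * ‖T y‖) →
      ∀ (x : Fin n → X), (∃ i j, x i ≠ x j) →
      ∀ t : ℕ,
        (1 - 1 / (4 * d ^ 2) ≤ lazyPowerRayleigh n π A (fun i => T (x i)) t) →
        (∀ s : ℕ, s < t →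
          ¬(1 - 1 / (4 * d ^ 2) ≤ lazyPowerRayleigh n π A (fun i => T (x i)) s)) →
        1 / ((∑ i, ∑ j, π i * A i j * ‖x i - x j‖ ^ 2) /
              (∑ i, ∑ j, π i * π j * ‖x i - x j‖ ^ 2)) ≤ C * (t : ℝ) ^ 2 := by
  refine ⟨32, by norm_num, ?_⟩
  intro n π hπpos hπ1 A hA0 hArow hArev X _ _ H _ _ T d hd hT x hx t hyp _
  have hπ0 : ∀ i, 0 ≤ π i := fun i => (hπpos i).le
  have hdpos : (0:ℝ) < d := lt_of_lt_of_le one_pos hd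
  have hd2 : (1:ℝ) ≤ d ^ 2 := by nlinarith
  -- lazy matrix
  set Q : Matrix (Fin n) (Fin n) ℝ :=
    (1 / 2 : ℝ) • (1 : Matrix (Fin n) (Fin n) ℝ) + (1 / 2 : ℝ) • A with hQdef
  have hQentry : ∀ i j, Q i j = (1/2) * (if i = j then (1:ℝ) else 0) + (1/2) * A i j := by
    intro i j
    simp [hQdef, Matrix.add_apply, Matrix.smul_apply, Matrix.one_apply, smul_eq_mul]
  have hQ0 : ∀ i j, 0 ≤ Q i j := by
    intro i j; rw [hQentry]
    have := hA0 i j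
    split <;> nlinarith
  have hQrow : ∀ i, ∑ j, Q i j = 1 := by
    intro i
    rw [sum_congr rfl fun j _ => hQentry i j, sum_add_distrib, ← mul_sum, ← mul_sum, hArow i,
      Finset.sum_ite_eq univ i (fun _ => (1:ℝ))]
    norm_num
  have hQrev : ∀ i j, π i * Q i j = π j * Q j i := by
    intro i j
    rw [hQentry, hQentry]
    rcases eq_or_ne i j with h | h
    · subst h; ring
    · rw [if_neg h, if_neg (Ne.symm h)]
      linear_combination (hArev i j) / 2
  -- centering
  set c : X := ∑ j, π j • x j with hcdef
  set y : Fin n → X := fun i => x i - c with hydef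
  set Y : Fin n → H := fun i => T (y i) with hYdef
  have hyc : ∑ i, π i • y i = 0 := by
    show ∑ i, π i • (x i - c) = 0
    calc ∑ i, π i • (x i - c) = (∑ i, π i • x i) - (∑ i, π i) • c := by
          rw [sum_smul, ← sum_sub_distrib]
          exact sum_congr rfl fun i _ => smul_sub _ _ _
      _ = 0 := by rw [hπ1, one_smul, ← hcdef, sub_self]
  have hYc : ∑ i, π i • Y i = 0 := by
    show ∑ i, π i • T (y i) = 0
    calc ∑ i, π i • T (y i) = T (∑ i, π i • y i) := by
          rw [map_sum]
          exact sum_congr rfl fun i _ => (map_smul T _ _).symm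
      _ = 0 := by rw [hyc, map_zero]
  have hdiff : ∀ i j, y i - y j = x i - x j := fun i j => sub_sub_sub_cancel_right _ _ _
  have hTdiff : ∀ i j, T (x i) - T (x j) = Y i - Y j := by
    intro i j
    show T (x i) - T (x j) = T (y i) - T (y j)
    rw [← map_sub, ← map_sub, hdiff]
  -- positivity of spreads
  set SX : ℝ := ∑ i, π i * ‖y i‖ ^ 2 with hSXdef
  set SH : ℝ := ∑ i, π i * ‖Y i‖ ^ 2 with hSHdef
  obtain ⟨i0, j0, hij⟩ := hx
  have hyij : y i0 ≠ y j0 := by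
    show x i0 - c ≠ x j0 - c
    simpa [sub_left_inj] using hij
  obtain ⟨k0, hk0⟩ : ∃ k, y k ≠ 0 := by
    by_contra h; push_neg at h; exact hyij (by rw [h i0, h j0])
  have hSXpos : 0 < SX := by
    have hterm : 0 < π k0 * ‖y k0‖ ^ 2 :=
      mul_pos (hπpos k0) (pow_pos (norm_pos_iff.mpr hk0) 2)
    have hle : π k0 * ‖y k0‖ ^ 2 ≤ SX :=
      Finset.single_le_sum (f := fun i => π i * ‖y i‖ ^ 2)
        (fun i _ => mul_nonneg (hπ0 i) (sq_nonneg _)) (mem_univ k0)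
    linarith
  have hYk0 : Y k0 ≠ 0 := by
    show T (y k0) ≠ 0
    simpa [LinearEquiv.map_eq_zero_iff] using hk0
  have hSHpos : 0 < SH := by
    have hterm : 0 < π k0 * ‖Y k0‖ ^ 2 :=
      mul_pos (hπpos k0) (pow_pos (norm_pos_iff.mpr hYk0) 2)
    have hle : π k0 * ‖Y k0‖ ^ 2 ≤ SH :=
      Finset.single_le_sum (f := fun i => π i * ‖Y i‖ ^ 2)
        (fun i _ => mul_nonneg (hπ0 i) (sq_nonneg _)) (mem_univ k0)
    linarith
  have hSHX : SH ≤ SX :=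
    sum_le_sum fun i _ => mul_le_mul_of_nonneg_left
      (pow_le_pow_left₀ (norm_nonneg _) ((hT (y i)).1) 2) (hπ0 i)
  -- rewrite the hypothesis
  have hlazy : ∀ s : ℕ, lazyPowerRayleigh n π A (fun i => T (x i)) s
      = (∑ i, ∑ j, π i * (Q ^ (2*s)) i j * ‖Y i - Y j‖ ^ 2) /
        (∑ i, ∑ j, π i * π j * ‖Y i - Y j‖ ^ 2) := by
    intro s
    simp only [lazyPowerRayleigh]
    rw [← hQdef]
    congr 1
    · exact sum_congr rfl fun i _ => sum_congr rfl fun j _ => by rw [hTdiff i j]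
    · exact sum_congr rfl fun i _ => sum_congr rfl fun j _ => by rw [hTdiff i j]
  have hden : ∑ i, ∑ j, π i * π j * ‖Y i - Y j‖ ^ 2 = 2 * SH :=
    hilbert_den π hπ1 Y hYc
  have hyp' : 1 - 1 / (4 * d ^ 2) ≤
      (∑ i, ∑ j, π i * (Q ^ (2*t)) i j * ‖Y i - Y j‖ ^ 2) / (2 * SH) := by
    have h := hyp
    rw [hlazy t, hden] at h
    exact h
  -- t ≥ 1
  have hquarter : 1 / (4 * d ^ 2) ≤ 1 / 4 :=
    one_div_le_one_div_of_le (by norm_num) (by nlinarith)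
  have htne : t ≠ 0 := by
    intro h0
    subst h0
    have hnum0 : ∑ i, ∑ j, π i * (Q ^ (2*0)) i j * ‖Y i - Y j‖ ^ 2 = 0 := by
      apply sum_eq_zero; intro i _
      apply sum_eq_zero; intro j _
      rcases eq_or_ne i j with h | h
      · simp [h]
      · simp [pow_zero, Matrix.one_apply, h]
    rw [hnum0, zero_div] at hyp'
    linarith
  have ht1 : (1:ℝ) ≤ (t:ℝ) := by exact_mod_cast Nat.one_le_iff_ne_zero.mpr htne
  -- the powered matrix
  set M : Matrix (Fin n) (Fin n) ℝ := Q ^ t with hMdef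
  have hM0 : ∀ i j, 0 ≤ M i j := pow_entry_nonneg Q hQ0 t
  have hMrow : ∀ i, ∑ j, M i j = 1 := pow_row_sum Q hQrow t
  have hMrev : ∀ i j, π i * M i j = π j * M j i := pow_reversible π Q hQrev t
  have hQ2t : Q ^ (2*t) = M * M := by rw [hMdef, ← pow_add, two_mul]
  set W : Fin n → H := fun k => ∑ i, M k i • Y i with hWdef
  set wX : Fin n → X := fun k => ∑ i, M k i • y i with hwXdef
  have hTwX : ∀ k, T (wX k) = W k := by
    intro k
    show T (∑ i, M k i • y i) = ∑ i, M k i • Y i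
    rw [map_sum]
    exact sum_congr rfl fun i _ => map_smul T _ _
  have hnum : ∑ i, ∑ j, π i * (Q ^ (2*t)) i j * ‖Y i - Y j‖ ^ 2
      = 2 * SH - 2 * ∑ k, π k * ‖W k‖ ^ 2 := by
    rw [hQ2t]
    exact hilbert_num π M hMrow hMrev Y
  have hW2 : ∑ k, π k * ‖W k‖ ^ 2 ≤ 1 / (4 * d ^ 2) * SH := by
    have h := hyp'
    rw [hnum] at h
    have h2SH : (0:ℝ) < 2 * SH := by linarith
    rw [le_div_iff₀ h2SH] at h
    nlinarith [h]
  have hwX2 : ∑ k, π k * ‖wX k‖ ^ 2 ≤ SX / 4 := by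
    have step1 : ∀ k, ‖wX k‖ ^ 2 ≤ d ^ 2 * ‖W k‖ ^ 2 := by
      intro k
      have h1 : ‖wX k‖ ≤ d * ‖W k‖ := by rw [← hTwX k]; exact (hT (wX k)).2
      have h2 := pow_le_pow_left₀ (norm_nonneg _) h1 2
      calc ‖wX k‖ ^ 2 ≤ (d * ‖W k‖) ^ 2 := h2
        _ = d ^ 2 * ‖W k‖ ^ 2 := by ring
    have hd2ne : d ^ 2 ≠ 0 := by positivity
    calc ∑ k, π k * ‖wX k‖ ^ 2 ≤ ∑ k, π k * (d ^ 2 * ‖W k‖ ^ 2) :=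
          sum_le_sum fun k _ => mul_le_mul_of_nonneg_left (step1 k) (hπ0 k)
      _ = d ^ 2 * ∑ k, π k * ‖W k‖ ^ 2 := by
          rw [mul_sum]; exact sum_congr rfl fun k _ => by ring
      _ ≤ d ^ 2 * (1 / (4 * d ^ 2) * SH) :=
          mul_le_mul_of_nonneg_left hW2 (by positivity)
      _ = SH / 4 := by field_simp
      _ ≤ SX / 4 := by linarith
  -- z = M applied twice
  set z : Fin n → X := fun k => ∑ i, M k i • wX i with hzdef
  have zrepr : ∀ k, ∑ j, (M * M) k j • y j = z k := by
    intro k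
    show ∑ j, (M * M) k j • y j = ∑ i, M k i • wX i
    calc ∑ j, (M * M) k j • y j = ∑ j, ∑ i, (M k i * M i j) • y j := by
          apply sum_congr rfl; intro j _
          rw [Matrix.mul_apply, sum_smul]
      _ = ∑ i, ∑ j, (M k i * M i j) • y j := Finset.sum_comm
      _ = ∑ i, M k i • wX i := by
          apply sum_congr rfl; intro i _
          show ∑ j, (M k i * M i j) • y j = M k i • ∑ j, M i j • y j
          rw [smul_sum]
          exact sum_congr rfl fun j _ => mul_smul _ _ _
  have hz2 : ∑ k, π k * ‖z k‖ ^ 2 ≤ SX / 4 :=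
    le_trans (jensenC π hπ0 M hM0 hMrow hMrev wX) hwX2
  set E2t : ℝ := ∑ i, ∑ j, π i * (Q ^ (2*t)) i j * ‖y i - y j‖ ^ 2 with hE2tdef
  have hMM0 : ∀ i j, 0 ≤ (M * M) i j := by
    intro i j
    have := pow_entry_nonneg Q hQ0 (2*t) i j
    rwa [hQ2t] at this
  have hMMrow : ∀ i, ∑ j, (M * M) i j = 1 := by
    intro i
    have := pow_row_sum Q hQrow (2*t) i
    rwa [hQ2t] at this
  have hconv : ∑ i, π i * ‖y i - z i‖ ^ 2 ≤ E2t := by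
    rw [hE2tdef]
    calc ∑ i, π i * ‖y i - z i‖ ^ 2
        = ∑ i, π i * ‖y i - ∑ j, (M * M) i j • y j‖ ^ 2 := by
          exact sum_congr rfl fun i _ => by rw [zrepr i]
      _ ≤ ∑ i, ∑ j, π i * (M * M) i j * ‖y i - y j‖ ^ 2 :=
          convexityC π hπ0 (M * M) hMM0 hMMrow y
      _ = ∑ i, ∑ j, π i * (Q ^ (2*t)) i j * ‖y i - y j‖ ^ 2 := by rw [← hQ2t]
  have hE2tSX : SX / 4 ≤ E2t := by
    have htri := l2triangle π hπ0 y z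
    have hsqrt4 : Real.sqrt (SX / 4) = Real.sqrt SX / 2 := by
      rw [show SX / 4 = (Real.sqrt SX / 2) ^ 2 by
        rw [div_pow, Real.sq_sqrt hSXpos.le]; norm_num]
      exact Real.sqrt_sq (by positivity)
    have h1 : Real.sqrt (∑ i, π i * ‖z i‖ ^ 2) ≤ Real.sqrt SX / 2 := by
      have := Real.sqrt_le_sqrt hz2
      rwa [hsqrt4] at this
    have h2 : Real.sqrt SX / 2 ≤ Real.sqrt (∑ i, π i * ‖y i - z i‖ ^ 2) := by
      have hSXfold : Real.sqrt (∑ i, π i * ‖y i‖ ^ 2) = Real.sqrt SX := by rw [← hSXdef]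
      rw [hSXfold] at htri
      linarith
    have h3 := pow_le_pow_left₀ (by positivity) h2 2
    have hnn : (0:ℝ) ≤ ∑ i, π i * ‖y i - z i‖ ^ 2 :=
      sum_nonneg fun i _ => mul_nonneg (hπ0 i) (sq_nonneg _)
    rw [Real.sq_sqrt hnn, div_pow, Real.sq_sqrt hSXpos.le] at h3
    have : SX / 4 ≤ ∑ i, π i * ‖y i - z i‖ ^ 2 := by
      calc SX / 4 = SX / 2 ^ 2 := by norm_num
        _ ≤ _ := h3
    linarith [hconv]
  -- chain bound
  set EQ : ℝ := ∑ i, ∑ j, π i * Q i j * ‖y i - y j‖ ^ 2 with hEQdef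
  set EA : ℝ := ∑ i, ∑ j, π i * A i j * ‖y i - y j‖ ^ 2 with hEAdef
  have hchain := chain_pow π hπ0 Q hQ0 hQrow hQrev y (2*t)
  have hE2tnn : 0 ≤ E2t :=
    sum_nonneg fun i _ => sum_nonneg fun j _ =>
      mul_nonneg (mul_nonneg (hπ0 i) (pow_entry_nonneg Q hQ0 _ i j)) (sq_nonneg _)
  have hEQnn : 0 ≤ EQ :=
    sum_nonneg fun i _ => sum_nonneg fun j _ =>
      mul_nonneg (mul_nonneg (hπ0 i) (hQ0 i j)) (sq_nonneg _)
  have hE2tle : E2t ≤ 4 * (t:ℝ) ^ 2 * EQ := by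
    have h1 : Real.sqrt E2t ≤ (2 * (t:ℝ)) * Real.sqrt EQ := by
      have := hchain
      push_cast at this
      exact this
    have h2 := pow_le_pow_left₀ (Real.sqrt_nonneg _) h1 2
    rw [Real.sq_sqrt hE2tnn] at h2
    calc E2t ≤ ((2 * (t:ℝ)) * Real.sqrt EQ) ^ 2 := h2
      _ = 4 * (t:ℝ) ^ 2 * Real.sqrt EQ ^ 2 := by ring
      _ = 4 * (t:ℝ) ^ 2 * EQ := by rw [Real.sq_sqrt hEQnn]
  have hEQEA : EQ = (1/2) * EA := by
    rw [hEQdef, hEAdef, mul_sum]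
    apply sum_congr rfl; intro i _
    rw [mul_sum]
    apply sum_congr rfl; intro j _
    rw [hQentry i j]
    rcases eq_or_ne i j with h | h
    · subst h; simp
    · rw [if_neg h]; ring
  have hEA8 : SX ≤ 8 * (t:ℝ) ^ 2 * EA := by
    rw [hEQEA] at hE2tle
    have hr : (4:ℝ) * (t:ℝ) ^ 2 * ((1/2) * EA) = 2 * ((t:ℝ) ^ 2 * EA) := by ring
    rw [hr] at hE2tle
    have : SX ≤ 8 * ((t:ℝ) ^ 2 * EA) := by linarith
    linarith [this, (by ring : (8:ℝ) * ((t:ℝ)^2 * EA) = 8 * (t:ℝ)^2 * EA)]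
  have hEApos : 0 < EA := by
    rcases lt_or_ge 0 EA with h | h
    · exact h
    · exfalso
      have ht2 : (0:ℝ) ≤ (t:ℝ)^2 := sq_nonneg _
      nlinarith [hEA8, hSXpos]
  -- denominator bound
  set DX : ℝ := ∑ i, ∑ j, π i * π j * ‖y i - y j‖ ^ 2 with hDXdef
  have hA1 : ∑ i, ∑ j, π i * π j * ‖y i‖ ^ 2 = SX := by
    rw [hSXdef]
    apply sum_congr rfl; intro i _
    calc ∑ j, π i * π j * ‖y i‖ ^ 2 = (π i * ‖y i‖ ^ 2) * ∑ j, π j := by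
          rw [mul_sum]; exact sum_congr rfl fun j _ => by ring
      _ = π i * ‖y i‖ ^ 2 := by rw [hπ1, mul_one]
  have hA2 : ∑ i, ∑ j, π i * π j * ‖y j‖ ^ 2 = SX := by
    rw [sum_comm, hSXdef]
    apply sum_congr rfl; intro j _
    calc ∑ i, π i * π j * ‖y j‖ ^ 2 = (∑ i, π i) * (π j * ‖y j‖ ^ 2) := by
          rw [sum_mul]; exact sum_congr rfl fun i _ => by ring
      _ = π j * ‖y j‖ ^ 2 := by rw [hπ1, one_mul]
  have hDX4 : DX ≤ 4 * SX := by
    have hle : DX ≤ ∑ i, ∑ j,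
        (2 * (π i * π j * ‖y i‖ ^ 2) + 2 * (π i * π j * ‖y j‖ ^ 2)) := by
      rw [hDXdef]
      apply sum_le_sum; intro i _
      apply sum_le_sum; intro j _
      have h1 : ‖y i - y j‖ ≤ ‖y i‖ + ‖y j‖ := norm_sub_le _ _
      have h2 : ‖y i - y j‖ ^ 2 ≤ 2 * ‖y i‖ ^ 2 + 2 * ‖y j‖ ^ 2 := by
        nlinarith [norm_nonneg (y i - y j), norm_nonneg (y i), norm_nonneg (y j),
          sq_nonneg (‖y i‖ - ‖y j‖)]
      have hp : (0:ℝ) ≤ π i * π j := mul_nonneg (hπ0 i) (hπ0 j)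
      nlinarith [mul_le_mul_of_nonneg_left h2 hp]
    have hrhs : ∑ i, ∑ j, (2 * (π i * π j * ‖y i‖ ^ 2) + 2 * (π i * π j * ‖y j‖ ^ 2))
        = 4 * SX := by
      have hstep : ∀ i, ∑ j, (2 * (π i * π j * ‖y i‖ ^ 2) + 2 * (π i * π j * ‖y j‖ ^ 2))
          = 2 * ∑ j, π i * π j * ‖y i‖ ^ 2 + 2 * ∑ j, π i * π j * ‖y j‖ ^ 2 := by
        intro i
        rw [sum_add_distrib, mul_sum, mul_sum]
      rw [sum_congr rfl fun i _ => hstep i, sum_add_distrib, ← mul_sum, ← mul_sum, hA1, hA2]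
      ring
    linarith [hle, hrhs.le, hrhs.ge]
  -- conclusion
  have hg1 : ∑ i, ∑ j, π i * A i j * ‖x i - x j‖ ^ 2 = EA := by
    rw [hEAdef]
    exact sum_congr rfl fun i _ => sum_congr rfl fun j _ => by rw [hdiff i j]
  have hg2 : ∑ i, ∑ j, π i * π j * ‖x i - x j‖ ^ 2 = DX := by
    rw [hDXdef]
    exact sum_congr rfl fun i _ => sum_congr rfl fun j _ => by rw [hdiff i j]
  rw [hg1, hg2, one_div_div, div_le_iff₀ hEApos]
  linarith [hDX4, hEA8]
end

section
/- Nonlinear spectral gap bound for Hilbert isomorphs: let X be a normed space admitting a Hilbertian norm ‖·‖_H with ‖y‖_H ≤ ‖y‖_X ≤ d‖y‖_H for all y ∈ X. Then for every n × n row-stochastic matrix A reversible with respect to a fully-supported probability measure π on {1,…,n} with λ₂(A) < 1, the nonlinear spectral gap satisfies √γ(A, ‖·‖_X²) ≤ C log(2d)/(1 − λ₂(A)) for a universal constant C. -/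
open scoped BigOperators

/-- The second-largest eigenvalue of A as a self-adjoint operator on L₂(π). -/
noncomputable def lambdaTwo (n : ℕ) (π : Fin n → ℝ)
    (A : Matrix (Fin n) (Fin n) ℝ) : ℝ :=
  sSup {r : ℝ | ∃ u : Fin n → ℝ, (∑ i, π i * u i) = 0 ∧
    (∑ i, π i * u i ^ 2) = 1 ∧ r = ∑ i, ∑ j, π i * A i j * u i * u j}

/-- The nonlinear spectral gap γ(A, ‖·‖_X²) of A with respect to the squared
norm of a normed space X. -/
noncomputable def nonlinearSpectralGapSq (n : ℕ) (π : Fin n → ℝ)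
    (A : Matrix (Fin n) (Fin n) ℝ) (X : Type*) [NormedAddCommGroup X] : ℝ :=
  sInf {γ : ℝ | 0 < γ ∧ ∀ x : Fin n → X,
    ∑ i, ∑ j, π i * π j * ‖x i - x j‖ ^ 2 ≤
      γ * ∑ i, ∑ j, π i * A i j * ‖x i - x j‖ ^ 2}

section Aux
variable {n : ℕ} {π : Fin n → ℝ} {A : Matrix (Fin n) (Fin n) ℝ}

lemma my_stat (hA1 : ∀ i, ∑ j, A i j = 1)
    (hrev : ∀ i j, π i * A i j = π j * A j i) (j : Fin n) :
    ∑ i, π i * A i j = π j := by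
  calc ∑ i, π i * A i j = ∑ i, π j * A j i := by
        exact Finset.sum_congr rfl fun i _ => hrev i j
    _ = π j * ∑ i, A j i := by rw [Finset.mul_sum]
    _ = π j := by rw [hA1 j, mul_one]

lemma my_diag_sum (hA1 : ∀ i, ∑ j, A i j = 1)
    (hrev : ∀ i j, π i * A i j = π j * A j i) (g : Fin n → ℝ) :
    (∑ i, ∑ j, π i * A i j * g i ^ 2 = ∑ i, π i * g i ^ 2) ∧
    (∑ i, ∑ j, π i * A i j * g j ^ 2 = ∑ i, π i * g i ^ 2) := by
  constructor
  · calc ∑ i, ∑ j, π i * A i j * g i ^2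
        = ∑ i, π i * g i ^2 * ∑ j, A i j := by
          refine Finset.sum_congr rfl fun i _ => ?_
          rw [Finset.mul_sum]; exact Finset.sum_congr rfl fun j _ => by ring
      _ = ∑ i, π i * g i ^ 2 := by simp only [hA1, mul_one]
  · rw [Finset.sum_comm]
    calc ∑ j, ∑ i, π i * A i j * g j ^2
        = ∑ j, (∑ i, π i * A i j) * g j ^2 := by
          refine Finset.sum_congr rfl fun j _ => ?_
          rw [Finset.sum_mul]
      _ = ∑ j, π j * g j ^ 2 := by simp only [my_stat hA1 hrev]

/-- the quadratic form of A is bounded above by the π-norm squared -/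
lemma my_form_ub (hA0 : ∀ i j, 0 ≤ A i j) (hA1 : ∀ i, ∑ j, A i j = 1)
    (hrev : ∀ i j, π i * A i j = π j * A j i) (hπ : ∀ i, 0 ≤ π i)
    (g : Fin n → ℝ) :
    ∑ i, ∑ j, π i * A i j * g i * g j ≤ ∑ i, π i * g i ^ 2 := by
  obtain ⟨e1, e2⟩ := my_diag_sum hA1 hrev g
  have key : ∑ i, ∑ j, (π i * A i j * g i * g j - (π i * A i j * g i ^2)/2
      - (π i * A i j * g j ^2)/2) ≤ 0 := by
    refine Finset.sum_nonpos fun i _ => Finset.sum_nonpos fun j _ => ?_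
    have h1 : 0 ≤ π i * A i j := mul_nonneg (hπ i) (hA0 i j)
    nlinarith [sq_nonneg (g i - g j)]
  have expand : ∑ i, ∑ j, (π i * A i j * g i * g j - (π i * A i j * g i ^2)/2
      - (π i * A i j * g j ^2)/2)
      = (∑ i, ∑ j, π i * A i j * g i * g j) - (∑ i, ∑ j, π i * A i j * g i ^2)/2
        - (∑ i, ∑ j, π i * A i j * g j ^2)/2 := by
    rw [Finset.sum_div, Finset.sum_div, ← Finset.sum_sub_distrib, ← Finset.sum_sub_distrib]
    refine Finset.sum_congr rfl fun i _ => ?_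
    rw [Finset.sum_div, Finset.sum_div, ← Finset.sum_sub_distrib, ← Finset.sum_sub_distrib]
  rw [expand, e1, e2] at key; linarith

/-- the quadratic form of A is bounded below by minus the π-norm squared -/
lemma my_form_lb (hA0 : ∀ i j, 0 ≤ A i j) (hA1 : ∀ i, ∑ j, A i j = 1)
    (hrev : ∀ i j, π i * A i j = π j * A j i) (hπ : ∀ i, 0 ≤ π i)
    (g : Fin n → ℝ) :
    -(∑ i, π i * g i ^ 2) ≤ ∑ i, ∑ j, π i * A i j * g i * g j := by
  obtain ⟨e1, e2⟩ := my_diag_sum hA1 hrev g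
  have key : 0 ≤ ∑ i, ∑ j, (π i * A i j * g i * g j + (π i * A i j * g i ^2)/2
      + (π i * A i j * g j ^2)/2) := by
    refine Finset.sum_nonneg fun i _ => Finset.sum_nonneg fun j _ => ?_
    have h1 : 0 ≤ π i * A i j := mul_nonneg (hπ i) (hA0 i j)
    nlinarith [sq_nonneg (g i + g j)]
  have expand : ∑ i, ∑ j, (π i * A i j * g i * g j + (π i * A i j * g i ^2)/2
      + (π i * A i j * g j ^2)/2)
      = (∑ i, ∑ j, π i * A i j * g i * g j) + (∑ i, ∑ j, π i * A i j * g i ^2)/2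
        + (∑ i, ∑ j, π i * A i j * g j ^2)/2 := by
    rw [Finset.sum_div, Finset.sum_div, ← Finset.sum_add_distrib, ← Finset.sum_add_distrib]
    refine Finset.sum_congr rfl fun i _ => ?_
    rw [Finset.sum_div, Finset.sum_div, ← Finset.sum_add_distrib, ← Finset.sum_add_distrib]
  rw [expand, e1, e2] at key; linarith

lemma my_bddAbove (hA0 : ∀ i j, 0 ≤ A i j) (hA1 : ∀ i, ∑ j, A i j = 1)
    (hrev : ∀ i j, π i * A i j = π j * A j i) (hπ : ∀ i, 0 ≤ π i) :
    BddAbove {r : ℝ | ∃ u : Fin n → ℝ, (∑ i, π i * u i) = 0 ∧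
      (∑ i, π i * u i ^ 2) = 1 ∧ r = ∑ i, ∑ j, π i * A i j * u i * u j} := by
  refine ⟨1, fun r hr => ?_⟩
  obtain ⟨u, _, hu2, rfl⟩ := hr
  have := my_form_ub hA0 hA1 hrev hπ u
  rw [hu2] at this; exact this

lemma my_lam_ge (hA0 : ∀ i j, 0 ≤ A i j) (hA1 : ∀ i, ∑ j, A i j = 1)
    (hrev : ∀ i j, π i * A i j = π j * A j i) (hπ : ∀ i, 0 ≤ π i) :
    -1 ≤ lambdaTwo n π A := by
  set S := {r : ℝ | ∃ u : Fin n → ℝ, (∑ i, π i * u i) = 0 ∧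
      (∑ i, π i * u i ^ 2) = 1 ∧ r = ∑ i, ∑ j, π i * A i j * u i * u j}
  rcases Set.eq_empty_or_nonempty S with hS | hS
  · unfold lambdaTwo; rw [show {r : ℝ | ∃ u : Fin n → ℝ, (∑ i, π i * u i) = 0 ∧
      (∑ i, π i * u i ^ 2) = 1 ∧ r = ∑ i, ∑ j, π i * A i j * u i * u j} = S from rfl, hS,
      Real.sSup_empty]; norm_num
  · obtain ⟨r, hr⟩ := hS
    have h1 : r ≤ lambdaTwo n π A := le_csSup (my_bddAbove hA0 hA1 hrev hπ) hr
    obtain ⟨u, _, hu2, rfl⟩ := hr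
    have := my_form_lb hA0 hA1 hrev hπ u
    rw [hu2] at this; linarith

/-- Rayleigh quotient bound for mean-zero vectors -/
lemma my_rayleigh (hA0 : ∀ i j, 0 ≤ A i j) (hA1 : ∀ i, ∑ j, A i j = 1)
    (hrev : ∀ i j, π i * A i j = π j * A j i) (hπ : ∀ i, 0 < π i)
    (g : Fin n → ℝ) (hg : ∑ i, π i * g i = 0) :
    ∑ i, ∑ j, π i * A i j * g i * g j ≤ lambdaTwo n π A * ∑ i, π i * g i ^ 2 := by
  set s2 := ∑ i, π i * g i ^ 2 with hs2
  have hs2nn : 0 ≤ s2 := Finset.sum_nonneg fun i _ =>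
    mul_nonneg (hπ i).le (sq_nonneg _)
  rcases eq_or_lt_of_le hs2nn with h0 | hpos
  · -- s2 = 0 : all g i = 0
    have hz : ∀ i, g i = 0 := by
      intro i
      have hterm : ∀ k ∈ Finset.univ, (0:ℝ) ≤ π k * g k ^ 2 := fun k _ =>
        mul_nonneg (hπ k).le (sq_nonneg _)
      have h := (Finset.sum_eq_zero_iff_of_nonneg hterm).1 h0.symm i (Finset.mem_univ i)
      have h2 : g i ^ 2 = 0 := (mul_eq_zero.1 h).resolve_left (ne_of_gt (hπ i))
      exact sq_eq_zero_iff.1 h2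
    have : ∑ i, ∑ j, π i * A i j * g i * g j = 0 := by
      refine Finset.sum_eq_zero fun i _ => Finset.sum_eq_zero fun j _ => ?_
      rw [hz i]; ring
    rw [this, ← h0, mul_zero]
  · set s := Real.sqrt s2 with hs
    have hspos : 0 < s := Real.sqrt_pos.2 hpos
    have hss : s * s = s2 := Real.mul_self_sqrt hs2nn
    set u := fun i => g i / s with hu
    have hmem : (∑ i, ∑ j, π i * A i j * u i * u j) ∈
        {r : ℝ | ∃ u : Fin n → ℝ, (∑ i, π i * u i) = 0 ∧
        (∑ i, π i * u i ^ 2) = 1 ∧ r = ∑ i, ∑ j, π i * A i j * u i * u j} := by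
      refine ⟨u, ?_, ?_, rfl⟩
      · rw [show (∑ i, π i * u i) = (∑ i, π i * g i)/s by
          rw [Finset.sum_div]; exact Finset.sum_congr rfl fun i _ => by
            simp only [hu]; ring]
        rw [hg, zero_div]
      · have e : ∀ i, π i * u i ^ 2 = π i * g i ^ 2 / s2 := by
          intro i
          simp only [hu, sq]
          rw [div_mul_div_comm, hss]
          ring
        rw [Finset.sum_congr rfl fun i _ => e i, ← Finset.sum_div, ← hs2,
          div_self (ne_of_gt hpos)]
    have hle : (∑ i, ∑ j, π i * A i j * u i * u j) ≤ lambdaTwo n π A :=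
      le_csSup (my_bddAbove hA0 hA1 hrev (fun i => (hπ i).le)) hmem
    have hQ : ∑ i, ∑ j, π i * A i j * g i * g j
        = (∑ i, ∑ j, π i * A i j * u i * u j) * s2 := by
      rw [Finset.sum_mul]
      refine Finset.sum_congr rfl fun i _ => ?_
      rw [Finset.sum_mul]
      refine Finset.sum_congr rfl fun j _ => ?_
      have e : u i * u j * s2 = g i * g j := by
        simp only [hu]
        rw [div_mul_div_comm, hss, div_mul_cancel₀ _ (ne_of_gt hpos)]
      calc π i * A i j * g i * g j = π i * A i j * (g i * g j) := by ring
        _ = π i * A i j * (u i * u j * s2) := by rw [e]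
        _ = π i * A i j * u i * u j * s2 := by ring
    rw [hQ]
    exact mul_le_mul_of_nonneg_right hle hs2nn

end Aux
noncomputable def myLazy {n : ℕ} (A : Matrix (Fin n) (Fin n) ℝ) :
    Matrix (Fin n) (Fin n) ℝ := (2:ℝ)⁻¹ • (1 + A)

section LazyBasic
variable {n : ℕ} {π : Fin n → ℝ} {A : Matrix (Fin n) (Fin n) ℝ}

lemma myLazy_apply (i j : Fin n) :
    myLazy A i j = ((if i = j then 1 else 0) + A i j) / 2 := by
  simp [myLazy, Matrix.smul_apply, Matrix.add_apply, Matrix.one_apply]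
  ring

lemma myLazy_nonneg (hA0 : ∀ i j, 0 ≤ A i j) (i j : Fin n) : 0 ≤ myLazy A i j := by
  rw [myLazy_apply]
  have := hA0 i j
  split <;> linarith

lemma myLazy_rowsum (hA1 : ∀ i, ∑ j, A i j = 1) (i : Fin n) :
    ∑ j, myLazy A i j = 1 := by
  simp only [myLazy_apply]
  rw [← Finset.sum_div, Finset.sum_add_distrib, hA1, Finset.sum_ite_eq Finset.univ i fun _ => (1:ℝ)]
  simp

lemma myLazy_rev (hrev : ∀ i j, π i * A i j = π j * A j i) (i j : Fin n) :
    π i * myLazy A i j = π j * myLazy A j i := by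
  simp only [myLazy_apply]
  rcases eq_or_ne i j with h | h
  · subst h; ring
  · simp [h, Ne.symm h]
    have := hrev i j
    ring_nf
    nlinarith [hrev i j]

lemma myLazyPow_nonneg (hA0 : ∀ i j, 0 ≤ A i j) (t : ℕ) (i j : Fin n) :
    0 ≤ (myLazy A ^ t) i j := by
  induction t generalizing i j with
  | zero => simp [Matrix.one_apply]; split <;> norm_num
  | succ t ih =>
    rw [pow_succ']
    rw [Matrix.mul_apply]
    exact Finset.sum_nonneg fun k _ => mul_nonneg (myLazy_nonneg hA0 i k) (ih k j)

lemma myLazyPow_rowsum (hA0 : ∀ i j, 0 ≤ A i j) (hA1 : ∀ i, ∑ j, A i j = 1)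
    (t : ℕ) (i : Fin n) : ∑ j, (myLazy A ^ t) i j = 1 := by
  induction t generalizing i with
  | zero => simp [Matrix.one_apply]
  | succ t ih =>
    simp only [pow_succ', Matrix.mul_apply]
    rw [Finset.sum_comm]
    calc ∑ k, ∑ j, myLazy A i k * (myLazy A ^ t) k j
        = ∑ k, myLazy A i k * ∑ j, (myLazy A ^ t) k j := by
          exact Finset.sum_congr rfl fun k _ => (Finset.mul_sum _ _ _).symm
      _ = ∑ k, myLazy A i k := by
          exact Finset.sum_congr rfl fun k _ => by rw [ih k, mul_one]
      _ = 1 := myLazy_rowsum hA1 i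

lemma myLazyPow_rev (hA1 : ∀ i, ∑ j, A i j = 1)
    (hrev : ∀ i j, π i * A i j = π j * A j i)
    (t : ℕ) (i j : Fin n) :
    π i * (myLazy A ^ t) i j = π j * (myLazy A ^ t) j i := by
  induction t generalizing i j with
  | zero =>
    simp only [pow_zero, Matrix.one_apply]
    rcases eq_or_ne i j with h | h
    · subst h; rfl
    · simp [h, Ne.symm h]
  | succ t ih =>
    have lhs : π i * (myLazy A ^ (t+1)) i j = ∑ k, myLazy A k i * (π k * (myLazy A ^ t) k j) := by
      rw [pow_succ', Matrix.mul_apply, Finset.mul_sum]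
      refine Finset.sum_congr rfl fun k _ => ?_
      have := myLazy_rev hrev i k
      calc π i * (myLazy A i k * (myLazy A ^ t) k j)
          = (π i * myLazy A i k) * (myLazy A ^ t) k j := by ring
        _ = (π k * myLazy A k i) * (myLazy A ^ t) k j := by rw [this]
        _ = myLazy A k i * (π k * (myLazy A ^ t) k j) := by ring
    have rhs : π j * (myLazy A ^ (t+1)) j i = ∑ k, myLazy A k i * (π k * (myLazy A ^ t) k j) := by
      rw [pow_succ, Matrix.mul_apply, Finset.mul_sum]
      refine Finset.sum_congr rfl fun k _ => ?_
      calc π j * ((myLazy A ^ t) j k * myLazy A k i)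
          = (π j * (myLazy A ^ t) j k) * myLazy A k i := by ring
        _ = (π k * (myLazy A ^ t) k j) * myLazy A k i := by rw [ih j k]
        _ = myLazy A k i * (π k * (myLazy A ^ t) k j) := by ring
    rw [lhs, rhs]

end LazyBasic

section Form
variable {n : ℕ} (π : Fin n → ℝ) (B : Matrix (Fin n) (Fin n) ℝ)

/-- the bilinear form of a matrix in L²(π) -/
noncomputable def myF (g h : Fin n → ℝ) : ℝ := ∑ i, ∑ j, π i * B i j * g i * h j

variable {π B}

lemma myF_symm (hrev : ∀ i j, π i * B i j = π j * B j i) (g h : Fin n → ℝ) :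
    myF π B g h = myF π B h g := by
  unfold myF
  rw [Finset.sum_comm]
  refine Finset.sum_congr rfl fun j _ => Finset.sum_congr rfl fun i _ => ?_
  calc π i * B i j * g i * h j = (π i * B i j) * (g i * h j) := by ring
    _ = (π j * B j i) * (g i * h j) := by rw [hrev i j]
    _ = π j * B j i * h j * g i := by ring

lemma myF_expand (g h : Fin n → ℝ) (c : ℝ) :
    myF π B (fun i => g i + c * h i) (fun i => g i + c * h i)
      = myF π B g g + c * myF π B g h + c * myF π B h g + c^2 * myF π B h h := by
  unfold myF
  have key : ∀ i j, π i * B i j * (g i + c * h i) * (g j + c * h j)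
      = π i * B i j * g i * g j + c * (π i * B i j * g i * h j)
        + c * (π i * B i j * h i * g j) + c^2 * (π i * B i j * h i * h j) := by
    intros; ring
  simp only [key, Finset.sum_add_distrib, ← Finset.mul_sum]

/-- Cauchy–Schwarz for a PSD symmetric bilinear form -/
lemma myF_cs (hrev : ∀ i j, π i * B i j = π j * B j i)
    (hpos : ∀ g : Fin n → ℝ, 0 ≤ myF π B g g) (g h : Fin n → ℝ) :
    (myF π B g h)^2 ≤ myF π B g g * myF π B h h := by
  have key : ∀ c : ℝ, 0 ≤ myF π B h h * (c * c) + (2 * myF π B g h) * c + myF π B g g := by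
    intro c
    have := hpos (fun i => g i + c * h i)
    rw [myF_expand g h c] at this
    rw [myF_symm hrev h g] at this
    nlinarith [this]
  have hd := discrim_le_zero key
  unfold discrim at hd
  nlinarith [hd]
end Form

section Contract
variable {n : ℕ} {π : Fin n → ℝ} {A : Matrix (Fin n) (Fin n) ℝ}

lemma myF_lazy_eq (g h : Fin n → ℝ) :
    myF π (myLazy A) g h
      = ((∑ i, π i * g i * h i) + ∑ i, ∑ j, π i * A i j * g i * h j)/2 := by
  unfold myF
  have key : ∀ i j : Fin n, π i * myLazy A i j * g i * h j
      = (if i = j then π i * g i * h i else 0)/2 + (π i * A i j * g i * h j)/2 := by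
    intro i j
    rw [myLazy_apply]
    rcases eq_or_ne i j with hij | hij
    · subst hij; simp; ring
    · simp [hij]; ring
  simp only [key, Finset.sum_add_distrib]
  have e1 : ∑ i, ∑ j, (if i = j then π i * g i * h i else 0)/2
      = (∑ i, π i * g i * h i)/2 := by
    rw [Finset.sum_div]
    refine Finset.sum_congr rfl fun i _ => ?_
    rw [← Finset.sum_div, Finset.sum_ite_eq Finset.univ i (fun _ => π i * g i * h i)]
    simp
  have e2 : ∑ i, ∑ j, (π i * A i j * g i * h j)/2
      = (∑ i, ∑ j, π i * A i j * g i * h j)/2 := by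
    rw [Finset.sum_div]
    refine Finset.sum_congr rfl fun i _ => (Finset.sum_div _ _ _).symm
  rw [e1, e2, ← add_div]

lemma myF_lazy_nonneg (hA0 : ∀ i j, 0 ≤ A i j) (hA1 : ∀ i, ∑ j, A i j = 1)
    (hrev : ∀ i j, π i * A i j = π j * A j i) (hπ : ∀ i, 0 ≤ π i)
    (g : Fin n → ℝ) : 0 ≤ myF π (myLazy A) g g := by
  rw [myF_lazy_eq]
  have h1 := my_form_lb hA0 hA1 hrev hπ g
  have h2 : ∑ i, π i * g i * g i = ∑ i, π i * g i ^ 2 :=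
    Finset.sum_congr rfl fun i _ => by ring
  rw [h2]
  linarith

lemma myF_lazy_le (hA0 : ∀ i j, 0 ≤ A i j) (hA1 : ∀ i, ∑ j, A i j = 1)
    (hrev : ∀ i j, π i * A i j = π j * A j i) (hπ : ∀ i, 0 < π i)
    (g : Fin n → ℝ) (hg : ∑ i, π i * g i = 0) :
    myF π (myLazy A) g g ≤ (1 + lambdaTwo n π A)/2 * ∑ i, π i * g i ^ 2 := by
  rw [myF_lazy_eq]
  have h1 := my_rayleigh hA0 hA1 hrev hπ g hg
  have h2 : ∑ i, π i * g i * g i = ∑ i, π i * g i ^ 2 :=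
    Finset.sum_congr rfl fun i _ => by ring
  rw [h2]
  linarith

/-- applying a stochastic reversible matrix preserves mean zero -/
lemma my_mean_preserved {W : Matrix (Fin n) (Fin n) ℝ}
    (hW1 : ∀ i, ∑ j, W i j = 1) (hWrev : ∀ i j, π i * W i j = π j * W j i)
    (g : Fin n → ℝ) (hg : ∑ i, π i * g i = 0) :
    ∑ i, π i * (∑ j, W i j * g j) = 0 := by
  calc ∑ i, π i * ∑ j, W i j * g j
      = ∑ i, ∑ j, π i * (W i j * g j) := by
        exact Finset.sum_congr rfl fun i _ => Finset.mul_sum _ _ _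
    _ = ∑ j, ∑ i, π i * (W i j * g j) := Finset.sum_comm
    _ = ∑ j, (∑ i, π i * W i j) * g j := by
        refine Finset.sum_congr rfl fun j _ => ?_
        rw [Finset.sum_mul]
        exact Finset.sum_congr rfl fun i _ => by ring
    _ = ∑ j, π j * g j := by
        refine Finset.sum_congr rfl fun j _ => by rw [my_stat hW1 hWrev j]
    _ = 0 := hg

end Contract

section Contract2
variable {n : ℕ} {π : Fin n → ℝ} {A : Matrix (Fin n) (Fin n) ℝ}

lemma my_contract_one (hA0 : ∀ i j, 0 ≤ A i j) (hA1 : ∀ i, ∑ j, A i j = 1)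
    (hrev : ∀ i j, π i * A i j = π j * A j i) (hπ : ∀ i, 0 < π i)
    (g : Fin n → ℝ) (hg : ∑ i, π i * g i = 0) :
    ∑ i, π i * (∑ j, myLazy A i j * g j)^2
      ≤ ((1 + lambdaTwo n π A)/2)^2 * ∑ i, π i * g i ^ 2 := by
  set μ := (1 + lambdaTwo n π A)/2 with hμ
  have hμ0 : 0 ≤ μ := by
    have := my_lam_ge hA0 hA1 hrev (fun i => (hπ i).le)
    rw [hμ]; linarith
  set Bg := fun k => ∑ j, myLazy A k j * g j with hBg
  -- key identity : F(g, Bg) = ‖Bg‖²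
  have hid : myF π (myLazy A) g Bg = ∑ j, π j * Bg j ^ 2 := by
    unfold myF
    rw [Finset.sum_comm]
    refine Finset.sum_congr rfl fun j _ => ?_
    calc ∑ i, π i * myLazy A i j * g i * Bg j
        = (∑ i, π i * myLazy A i j * g i) * Bg j := by rw [Finset.sum_mul]
      _ = (∑ i, π j * myLazy A j i * g i) * Bg j := by
          congr 1
          refine Finset.sum_congr rfl fun i _ => ?_
          calc π i * myLazy A i j * g i = (π i * myLazy A i j) * g i := by ring
            _ = (π j * myLazy A j i) * g i := by rw [myLazy_rev hrev i j]
            _ = π j * myLazy A j i * g i := by ring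
      _ = (π j * ∑ i, myLazy A j i * g i) * Bg j := by
          congr 1
          rw [Finset.mul_sum]
          exact Finset.sum_congr rfl fun i _ => (mul_assoc _ _ _)
      _ = π j * Bg j ^ 2 := by
          have e2 : (∑ i, myLazy A j i * g i) = Bg j := rfl
          rw [e2]; ring
  have hBgmean : ∑ i, π i * Bg i = 0 :=
    my_mean_preserved (myLazy_rowsum hA1) (myLazy_rev hrev) g hg
  set M2 := ∑ i, π i * g i ^ 2 with hM2
  set N2 := ∑ i, π i * Bg i ^ 2 with hN2
  have hM2nn : 0 ≤ M2 := Finset.sum_nonneg fun i _ => mul_nonneg (hπ i).le (sq_nonneg _)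
  have hN2nn : 0 ≤ N2 := Finset.sum_nonneg fun i _ => mul_nonneg (hπ i).le (sq_nonneg _)
  have h1 : myF π (myLazy A) g g ≤ μ * M2 := myF_lazy_le hA0 hA1 hrev hπ g hg
  have h2 : myF π (myLazy A) Bg Bg ≤ μ * N2 := myF_lazy_le hA0 hA1 hrev hπ Bg hBgmean
  have h1' : 0 ≤ myF π (myLazy A) g g := myF_lazy_nonneg hA0 hA1 hrev (fun i => (hπ i).le) g
  have h2' : 0 ≤ myF π (myLazy A) Bg Bg := myF_lazy_nonneg hA0 hA1 hrev (fun i => (hπ i).le) Bg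
  have hcs : (myF π (myLazy A) g Bg)^2
      ≤ myF π (myLazy A) g g * myF π (myLazy A) Bg Bg :=
    myF_cs (myLazy_rev hrev) (myF_lazy_nonneg hA0 hA1 hrev (fun i => (hπ i).le)) g Bg
  have hchain : N2^2 ≤ (μ * M2) * (μ * N2) := by
    calc N2^2 = (myF π (myLazy A) g Bg)^2 := by rw [hid]
      _ ≤ myF π (myLazy A) g g * myF π (myLazy A) Bg Bg := hcs
      _ ≤ (μ * M2) * (μ * N2) :=
          mul_le_mul h1 h2 h2' (by positivity)
  show N2 ≤ μ^2 * M2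
  rcases eq_or_lt_of_le hN2nn with h0 | hposN
  · rw [← h0]; positivity
  · nlinarith [hchain, hposN]

lemma my_contract_pow (hA0 : ∀ i j, 0 ≤ A i j) (hA1 : ∀ i, ∑ j, A i j = 1)
    (hrev : ∀ i j, π i * A i j = π j * A j i) (hπ : ∀ i, 0 < π i)
    (t : ℕ) (g : Fin n → ℝ) (hg : ∑ i, π i * g i = 0) :
    ∑ i, π i * (∑ j, (myLazy A ^ t) i j * g j)^2
      ≤ ((1 + lambdaTwo n π A)/2)^(2*t) * ∑ i, π i * g i ^ 2 := by
  set μ := (1 + lambdaTwo n π A)/2 with hμ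
  induction t with
  | zero =>
    have e : ∀ i : Fin n, (∑ j, ((myLazy A ^ 0) i j) * g j) = g i := by
      intro i
      simp [Matrix.one_apply]
    rw [Finset.sum_congr rfl fun i _ => by rw [e i]]
    simp
  | succ t ih =>
    set h := fun k => ∑ j, (myLazy A ^ t) k j * g j with hh
    have happ : ∀ i : Fin n, (∑ j, (myLazy A ^ (t+1)) i j * g j)
        = ∑ k, myLazy A i k * h k := by
      intro i
      simp only [pow_succ', Matrix.mul_apply, Finset.sum_mul]
      rw [Finset.sum_comm]
      refine Finset.sum_congr rfl fun k _ => ?_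
      rw [hh, Finset.mul_sum]
      exact Finset.sum_congr rfl fun j _ => (mul_assoc _ _ _)
    have hhmean : ∑ i, π i * h i = 0 :=
      my_mean_preserved (myLazyPow_rowsum hA0 hA1 t) (myLazyPow_rev hA1 hrev t) g hg
    have step := my_contract_one hA0 hA1 hrev hπ h hhmean
    have hμ0 : 0 ≤ μ := by
      have := my_lam_ge hA0 hA1 hrev (fun i => (hπ i).le)
      rw [hμ]; linarith
    calc ∑ i, π i * (∑ j, (myLazy A ^ (t+1)) i j * g j)^2
        = ∑ i, π i * (∑ k, myLazy A i k * h k)^2 := by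
          refine Finset.sum_congr rfl fun i _ => by rw [happ i]
      _ ≤ μ^2 * ∑ i, π i * h i ^ 2 := step
      _ ≤ μ^2 * (μ^(2*t) * ∑ i, π i * g i ^ 2) := by
          refine mul_le_mul_of_nonneg_left ?_ (by positivity)
          have e : ∑ i, π i * h i ^ 2 = ∑ i, π i * (∑ j, (myLazy A ^ t) i j * g j)^2 := rfl
          rw [e]; exact ih
      _ = μ^(2*(t+1)) * ∑ i, π i * g i ^ 2 := by ring

end Contract2

section HilbertContract
variable {n : ℕ} {π : Fin n → ℝ} {A : Matrix (Fin n) (Fin n) ℝ}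
variable {H : Type} [NormedAddCommGroup H] [InnerProductSpace ℝ H]

lemma my_contract_pow_H (hA0 : ∀ i j, 0 ≤ A i j) (hA1 : ∀ i, ∑ j, A i j = 1)
    (hrev : ∀ i j, π i * A i j = π j * A j i) (hπ : ∀ i, 0 < π i)
    (t : ℕ) (v : Fin n → H) (hv : ∑ i, π i • v i = 0) :
    ∑ i, π i * ‖∑ j, (myLazy A ^ t) i j • v j‖^2
      ≤ ((1 + lambdaTwo n π A)/2)^(2*t) * ∑ i, π i * ‖v i‖^2 := by
  classical
  set μ := (1 + lambdaTwo n π A)/2 with hμ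
  set S := Submodule.span ℝ (Set.range v) with hS
  haveI : FiniteDimensional ℝ S := FiniteDimensional.span_of_finite ℝ (Set.finite_range v)
  set b := stdOrthonormalBasis ℝ S with hb
  set w : Fin n → S := fun i => ⟨v i, Submodule.subset_span ⟨i, rfl⟩⟩ with hw
  set g : Fin (Module.finrank ℝ S) → Fin n → ℝ := fun k i => b.repr (w i) k with hg
  have parseval : ∀ x : S, ‖x‖^2 = ∑ k, (b.repr x k)^2 := by
    intro x
    rw [← b.repr.norm_map x, EuclideanSpace.norm_eq, Real.sq_sqrt (by positivity)]
    exact Finset.sum_congr rfl fun k _ => by rw [Real.norm_eq_abs, sq_abs]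
  have hwsum : (∑ i, π i • w i) = 0 := by
    have hcoe : ((∑ i, π i • w i : S) : H) = ∑ i, π i • v i := by
      push_cast
      rfl
    rw [← Submodule.coe_eq_zero, hcoe, hv]
  have hgmean : ∀ k, ∑ i, π i * g k i = 0 := by
    intro k
    have e : ∑ i, π i * g k i = b.repr (∑ i, π i • w i) k := by
      rw [map_sum]
      rw [WithLp.ofLp_sum, Finset.sum_apply]
      refine Finset.sum_congr rfl fun i _ => ?_
      rw [map_smul]
      rfl
    rw [e, hwsum, map_zero]
    rfl
  -- the image vectors, as elements of S
  set ws : Fin n → S := fun i => ∑ j, (myLazy A ^ t) i j • w j with hws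
  have hwscoe : ∀ i, ((ws i : S) : H) = ∑ j, (myLazy A ^ t) i j • v j := by
    intro i
    rw [hws]
    push_cast
    rfl
  have hwsrepr : ∀ i k, b.repr (ws i) k = ∑ j, (myLazy A ^ t) i j * g k j := by
    intro i k
    rw [hws]
    rw [map_sum, WithLp.ofLp_sum, Finset.sum_apply]
    refine Finset.sum_congr rfl fun j _ => ?_
    rw [map_smul]
    rfl
  calc ∑ i, π i * ‖∑ j, (myLazy A ^ t) i j • v j‖^2
      = ∑ i, π i * ∑ k, (∑ j, (myLazy A ^ t) i j * g k j)^2 := by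
        refine Finset.sum_congr rfl fun i _ => ?_
        rw [← hwscoe i]
        rw [show ‖((ws i : S) : H)‖ = ‖ws i‖ from rfl, parseval (ws i)]
        congr 1
        exact Finset.sum_congr rfl fun k _ => by rw [hwsrepr i k]
    _ = ∑ k, ∑ i, π i * (∑ j, (myLazy A ^ t) i j * g k j)^2 := by
        rw [Finset.sum_comm]
        · exact Finset.sum_congr rfl fun i _ => Finset.mul_sum _ _ _
    _ ≤ ∑ k, μ^(2*t) * ∑ i, π i * (g k i)^2 := by
        refine Finset.sum_le_sum fun k _ => ?_
        exact my_contract_pow hA0 hA1 hrev hπ t (g k) (hgmean k)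
    _ = μ^(2*t) * ∑ i, π i * ‖v i‖^2 := by
        rw [← Finset.mul_sum]
        congr 1
        rw [Finset.sum_comm]
        refine Finset.sum_congr rfl fun i _ => ?_
        rw [← Finset.mul_sum]
        congr 1
        rw [show ‖v i‖ = ‖w i‖ from rfl, parseval (w i)]

end HilbertContract

section Geometry
variable {n : ℕ} {π : Fin n → ℝ}
variable {X : Type} [NormedAddCommGroup X] [NormedSpace ℝ X]

lemma my_jensen (w : Fin n → ℝ) (hw0 : ∀ j, 0 ≤ w j) (hw1 : ∑ j, w j = 1)
    (z : Fin n → X) : ‖∑ j, w j • z j‖^2 ≤ ∑ j, w j * ‖z j‖^2 := by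
  have h1 : ‖∑ j, w j • z j‖ ≤ ∑ j, w j * ‖z j‖ := by
    calc ‖∑ j, w j • z j‖ ≤ ∑ j, ‖w j • z j‖ := norm_sum_le _ _
      _ = ∑ j, w j * ‖z j‖ := Finset.sum_congr rfl fun j _ => by
          rw [norm_smul, Real.norm_eq_abs, abs_of_nonneg (hw0 j)]
  have h2 : (∑ j, w j * ‖z j‖)^2 ≤ ∑ j, w j * ‖z j‖^2 := by
    have cs := Finset.sum_mul_sq_le_sq_mul_sq Finset.univ (fun j => Real.sqrt (w j))
      (fun j => Real.sqrt (w j) * ‖z j‖)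
    have e1 : ∀ j : Fin n, Real.sqrt (w j) * (Real.sqrt (w j) * ‖z j‖) = w j * ‖z j‖ := by
      intro j
      rw [← mul_assoc, Real.mul_self_sqrt (hw0 j)]
    have e2 : ∀ j : Fin n, Real.sqrt (w j) ^ 2 = w j := fun j => Real.sq_sqrt (hw0 j)
    have e3 : ∀ j : Fin n, (Real.sqrt (w j) * ‖z j‖)^2 = w j * ‖z j‖^2 := by
      intro j
      rw [mul_pow, Real.sq_sqrt (hw0 j)]
    rw [Finset.sum_congr rfl fun j _ => e1 j, Finset.sum_congr rfl fun j _ => e2 j,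
      Finset.sum_congr rfl fun j _ => e3 j, hw1, one_mul] at cs
    exact cs
  calc ‖∑ j, w j • z j‖^2 ≤ (∑ j, w j * ‖z j‖)^2 :=
      pow_le_pow_left₀ (norm_nonneg _) h1 2
    _ ≤ _ := h2

/-- composition of Dirichlet energies along a two-step chain -/
lemma my_E_comp (V W : Matrix (Fin n) (Fin n) ℝ) (hπ : ∀ i, 0 ≤ π i)
    (hV0 : ∀ i j, 0 ≤ V i j) (hVstat : ∀ j, ∑ i, π i * V i j = π j)
    (hW0 : ∀ i j, 0 ≤ W i j) (hW1 : ∀ i, ∑ j, W i j = 1)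
    (x : Fin n → X) :
    ∑ i, ∑ k, π i * (V * W) i k * ‖x i - x k‖^2
      ≤ (Real.sqrt (∑ i, ∑ j, π i * V i j * ‖x i - x j‖^2)
         + Real.sqrt (∑ j, ∑ k, π j * W j k * ‖x j - x k‖^2))^2 := by
  classical
  set EV := ∑ i, ∑ j, π i * V i j * ‖x i - x j‖^2 with hEV
  set EW := ∑ j, ∑ k, π j * W j k * ‖x j - x k‖^2 with hEW
  have hEVnn : 0 ≤ EV := Finset.sum_nonneg fun i _ => Finset.sum_nonneg fun j _ =>
    mul_nonneg (mul_nonneg (hπ i) (hV0 i j)) (sq_nonneg _)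
  have hEWnn : 0 ≤ EW := Finset.sum_nonneg fun j _ => Finset.sum_nonneg fun k _ =>
    mul_nonneg (mul_nonneg (hπ j) (hW0 j k)) (sq_nonneg _)
  set ν : Fin n → Fin n → Fin n → ℝ := fun i j k => π i * V i j * W j k with hν
  have hνnn : ∀ i j k, 0 ≤ ν i j k := fun i j k =>
    mul_nonneg (mul_nonneg (hπ i) (hV0 i j)) (hW0 j k)
  -- expand the product matrix
  have e0 : ∑ i, ∑ k, π i * (V * W) i k * ‖x i - x k‖^2
      = ∑ i, ∑ j, ∑ k, ν i j k * ‖x i - x k‖^2 := by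
    refine Finset.sum_congr rfl fun i _ => ?_
    rw [Finset.sum_comm]
    refine Finset.sum_congr rfl fun k _ => ?_
    rw [Matrix.mul_apply, Finset.mul_sum, Finset.sum_mul]
    refine Finset.sum_congr rfl fun j _ => by rw [hν]; ring
  -- the three energy sums
  have ea : ∑ i, ∑ j, ∑ k, ν i j k * ‖x i - x j‖^2 = EV := by
    refine Finset.sum_congr rfl fun i _ => Finset.sum_congr rfl fun j _ => ?_
    calc ∑ k, ν i j k * ‖x i - x j‖^2
        = π i * V i j * ‖x i - x j‖^2 * ∑ k, W j k := by
          rw [Finset.mul_sum]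
          refine Finset.sum_congr rfl fun k _ => by rw [hν]; ring
      _ = π i * V i j * ‖x i - x j‖^2 := by rw [hW1 j, mul_one]
  have eb : ∑ i, ∑ j, ∑ k, ν i j k * ‖x j - x k‖^2 = EW := by
    rw [Finset.sum_comm]
    refine Finset.sum_congr rfl fun j _ => ?_
    rw [Finset.sum_comm]
    refine Finset.sum_congr rfl fun k _ => ?_
    calc ∑ i, ν i j k * ‖x j - x k‖^2
        = (∑ i, π i * V i j) * W j k * ‖x j - x k‖^2 := by
          rw [Finset.sum_mul, Finset.sum_mul]
      _ = π j * W j k * ‖x j - x k‖^2 := by rw [hVstat j]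
  -- Cauchy-Schwarz over the triple product
  set P := (Finset.univ : Finset (Fin n × Fin n × Fin n)) with hP
  have tripl : ∀ F : Fin n → Fin n → Fin n → ℝ,
      ∑ p ∈ P, F p.1 p.2.1 p.2.2 = ∑ i, ∑ j, ∑ k, F i j k := by
    intro F
    rw [hP, Fintype.sum_prod_type]
    exact Finset.sum_congr rfl fun i _ => by rw [Fintype.sum_prod_type]
  have ecs : ∑ i, ∑ j, ∑ k, ν i j k * (‖x i - x j‖ * ‖x j - x k‖)
      ≤ Real.sqrt EV * Real.sqrt EW := by
    have cs := Finset.sum_mul_sq_le_sq_mul_sq P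
      (fun p => Real.sqrt (ν p.1 p.2.1 p.2.2) * ‖x p.1 - x p.2.1‖)
      (fun p => Real.sqrt (ν p.1 p.2.1 p.2.2) * ‖x p.2.1 - x p.2.2‖)
    have l1 : ∑ p ∈ P, (Real.sqrt (ν p.1 p.2.1 p.2.2) * ‖x p.1 - x p.2.1‖)
        * (Real.sqrt (ν p.1 p.2.1 p.2.2) * ‖x p.2.1 - x p.2.2‖)
        = ∑ i, ∑ j, ∑ k, ν i j k * (‖x i - x j‖ * ‖x j - x k‖) := by
      rw [tripl fun i j k => Real.sqrt (ν i j k) * ‖x i - x j‖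
        * (Real.sqrt (ν i j k) * ‖x j - x k‖)]
      refine Finset.sum_congr rfl fun i _ => Finset.sum_congr rfl fun j _ =>
        Finset.sum_congr rfl fun k _ => ?_
      rw [show Real.sqrt (ν i j k) * ‖x i - x j‖ * (Real.sqrt (ν i j k) * ‖x j - x k‖)
        = (Real.sqrt (ν i j k) * Real.sqrt (ν i j k)) * (‖x i - x j‖ * ‖x j - x k‖) from by ring,
        Real.mul_self_sqrt (hνnn i j k)]
    have l2 : ∑ p ∈ P, (Real.sqrt (ν p.1 p.2.1 p.2.2) * ‖x p.1 - x p.2.1‖)^2 = EV := by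
      rw [tripl fun i j k => (Real.sqrt (ν i j k) * ‖x i - x j‖)^2, ← ea]
      refine Finset.sum_congr rfl fun i _ => Finset.sum_congr rfl fun j _ =>
        Finset.sum_congr rfl fun k _ => ?_
      rw [mul_pow, Real.sq_sqrt (hνnn i j k)]
    have l3 : ∑ p ∈ P, (Real.sqrt (ν p.1 p.2.1 p.2.2) * ‖x p.2.1 - x p.2.2‖)^2 = EW := by
      rw [tripl fun i j k => (Real.sqrt (ν i j k) * ‖x j - x k‖)^2, ← eb]
      refine Finset.sum_congr rfl fun i _ => Finset.sum_congr rfl fun j _ =>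
        Finset.sum_congr rfl fun k _ => ?_
      rw [mul_pow, Real.sq_sqrt (hνnn i j k)]
    rw [l1, l2, l3] at cs
    have hSnn : 0 ≤ ∑ i, ∑ j, ∑ k, ν i j k * (‖x i - x j‖ * ‖x j - x k‖) :=
      Finset.sum_nonneg fun i _ => Finset.sum_nonneg fun j _ =>
        Finset.sum_nonneg fun k _ => mul_nonneg (hνnn i j k)
          (mul_nonneg (norm_nonneg _) (norm_nonneg _))
    calc ∑ i, ∑ j, ∑ k, ν i j k * (‖x i - x j‖ * ‖x j - x k‖)
        = Real.sqrt ((∑ i, ∑ j, ∑ k, ν i j k * (‖x i - x j‖ * ‖x j - x k‖))^2) :=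
          (Real.sqrt_sq hSnn).symm
      _ ≤ Real.sqrt (EV * EW) := Real.sqrt_le_sqrt cs
      _ = Real.sqrt EV * Real.sqrt EW := Real.sqrt_mul hEVnn EW
  -- pointwise triangle inequality
  have etri : ∑ i, ∑ j, ∑ k, ν i j k * ‖x i - x k‖^2
      ≤ ∑ i, ∑ j, ∑ k, (ν i j k * ‖x i - x j‖^2
        + 2 * (ν i j k * (‖x i - x j‖ * ‖x j - x k‖)) + ν i j k * ‖x j - x k‖^2) := by
    refine Finset.sum_le_sum fun i _ => Finset.sum_le_sum fun j _ =>
      Finset.sum_le_sum fun k _ => ?_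
    have htr : ‖x i - x k‖ ≤ ‖x i - x j‖ + ‖x j - x k‖ := by
      have h := dist_triangle (x i) (x j) (x k)
      simpa [dist_eq_norm] using h
    have h2 : ‖x i - x k‖^2 ≤ (‖x i - x j‖ + ‖x j - x k‖)^2 :=
      pow_le_pow_left₀ (norm_nonneg _) htr 2
    have h3 := mul_le_mul_of_nonneg_left h2 (hνnn i j k)
    nlinarith [h3]
  have esplit : ∑ i, ∑ j, ∑ k, (ν i j k * ‖x i - x j‖^2
        + 2 * (ν i j k * (‖x i - x j‖ * ‖x j - x k‖)) + ν i j k * ‖x j - x k‖^2)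
      = EV + 2 * (∑ i, ∑ j, ∑ k, ν i j k * (‖x i - x j‖ * ‖x j - x k‖)) + EW := by
    simp only [Finset.sum_add_distrib, ← Finset.mul_sum]
    rw [ea, eb]
  rw [e0]
  have expand : (Real.sqrt EV + Real.sqrt EW)^2
      = EV + 2 * (Real.sqrt EV * Real.sqrt EW) + EW := by
    rw [add_sq, Real.sq_sqrt hEVnn, Real.sq_sqrt hEWnn]
    ring
  rw [expand]
  calc ∑ i, ∑ j, ∑ k, ν i j k * ‖x i - x k‖^2
      ≤ EV + 2 * (∑ i, ∑ j, ∑ k, ν i j k * (‖x i - x j‖ * ‖x j - x k‖)) + EW := by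
        rw [← esplit]; exact etri
    _ ≤ EV + 2 * (Real.sqrt EV * Real.sqrt EW) + EW := by linarith [ecs]

end Geometry

section EnergyPow
variable {n : ℕ} {π : Fin n → ℝ} {A : Matrix (Fin n) (Fin n) ℝ}
variable {X : Type} [NormedAddCommGroup X] [NormedSpace ℝ X]

lemma my_E_nonneg (hπ : ∀ i, 0 ≤ π i) {W : Matrix (Fin n) (Fin n) ℝ}
    (hW0 : ∀ i j, 0 ≤ W i j) (x : Fin n → X) :
    0 ≤ ∑ i, ∑ j, π i * W i j * ‖x i - x j‖^2 :=
  Finset.sum_nonneg fun i _ => Finset.sum_nonneg fun j _ =>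
    mul_nonneg (mul_nonneg (hπ i) (hW0 i j)) (sq_nonneg _)

lemma my_E_pow (hπ : ∀ i, 0 ≤ π i) (hA0 : ∀ i j, 0 ≤ A i j)
    (hA1 : ∀ i, ∑ j, A i j = 1) (hrev : ∀ i j, π i * A i j = π j * A j i)
    (t : ℕ) (x : Fin n → X) :
    Real.sqrt (∑ i, ∑ j, π i * (myLazy A ^ t) i j * ‖x i - x j‖^2)
      ≤ t * Real.sqrt (∑ i, ∑ j, π i * myLazy A i j * ‖x i - x j‖^2) := by
  induction t with
  | zero =>
    have e : ∑ i, ∑ j, π i * (myLazy A ^ 0) i j * ‖x i - x j‖^2 = 0 := by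
      refine Finset.sum_eq_zero fun i _ => Finset.sum_eq_zero fun j _ => ?_
      rw [pow_zero, Matrix.one_apply]
      rcases eq_or_ne i j with h | h
      · subst h; simp
      · simp [h]
    rw [e, Real.sqrt_zero]
    simp
  | succ t ih =>
    have hstat : ∀ j, ∑ i, π i * (myLazy A ^ t) i j = π j :=
      my_stat (myLazyPow_rowsum hA0 hA1 t) (myLazyPow_rev hA1 hrev t)
    have comp := my_E_comp (π := π) (myLazy A ^ t) (myLazy A) hπ
      (myLazyPow_nonneg hA0 t) hstat (myLazy_nonneg hA0) (myLazy_rowsum hA1) x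
    rw [← pow_succ] at comp
    have hs := Real.sqrt_le_sqrt comp
    set a := Real.sqrt (∑ i, ∑ j, π i * (myLazy A ^ t) i j * ‖x i - x j‖^2) with ha
    set b := Real.sqrt (∑ i, ∑ j, π i * myLazy A i j * ‖x i - x j‖^2) with hb
    have hab : 0 ≤ a + b := by positivity
    rw [Real.sqrt_sq hab] at hs
    calc Real.sqrt (∑ i, ∑ j, π i * (myLazy A ^ (t+1)) i j * ‖x i - x j‖^2)
        ≤ a + b := hs
      _ ≤ t * b + b := by
          have hbnn : 0 ≤ b := Real.sqrt_nonneg _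
          linarith [ih]
      _ = (t + 1 : ℕ) * b := by push_cast; ring

lemma my_EB_half (x : Fin n → X) :
    ∑ i, ∑ j, π i * myLazy A i j * ‖x i - x j‖^2
      = (∑ i, ∑ j, π i * A i j * ‖x i - x j‖^2)/2 := by
  rw [Finset.sum_div]
  refine Finset.sum_congr rfl fun i _ => ?_
  rw [Finset.sum_div]
  refine Finset.sum_congr rfl fun j _ => ?_
  rw [myLazy_apply]
  rcases eq_or_ne i j with h | h
  · subst h; simp
  · simp [h]; ring

end EnergyPow

set_option maxHeartbeats 1600000

/-- Nonlinear spectral gap bound for Hilbert isomorphs: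
√γ(A, ‖·‖_X²) ≤ C log(2d)/(1 − λ₂(A)) for a universal constant C. -/
theorem nonlinearSpectralGap_hilbert_isomorph :
    ∃ C : ℝ, 0 < C ∧
      ∀ (X : Type) [NormedAddCommGroup X] [NormedSpace ℝ X]
        (H : Type) [NormedAddCommGroup H] [InnerProductSpace ℝ H]
        (T : X ≃ₗ[ℝ] H) (d : ℝ), 1 ≤ d →
        (∀ y : X, ‖T y‖ ≤ ‖y‖ ∧ ‖y‖ ≤ d * ‖T y‖) →
      ∀ (n : ℕ) (π : Fin n → ℝ), (∀ i, 0 < π i) → (∑ i, π i) = 1 →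
      ∀ (A : Matrix (Fin n) (Fin n) ℝ),
        (∀ i j, 0 ≤ A i j) → (∀ i, ∑ j, A i j = 1) →
        (∀ i j, π i * A i j = π j * A j i) →
        lambdaTwo n π A < 1 →
        Real.sqrt (nonlinearSpectralGapSq n π A X) ≤
          C * Real.log (2 * d) / (1 - lambdaTwo n π A) := by
  refine ⟨18, by norm_num, ?_⟩
  intro X _ _ H _ _ T d hd hT n π hπ hπ1 A hA0 hA1 hrev hlam
  have hlamge : -1 ≤ lambdaTwo n π A := my_lam_ge hA0 hA1 hrev fun i => (hπ i).le
  set lam := lambdaTwo n π A with hlamdef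
  set μ := (1 + lam)/2 with hμdef
  have hμ0 : 0 ≤ μ := by rw [hμdef]; linarith
  have h1μ : 0 < 1 - μ := by rw [hμdef]; linarith
  have h2d : (1:ℝ) < 2 * d := by linarith
  have hlog : 0 < Real.log (2*d) := Real.log_pos h2d
  have hlog2 : (1:ℝ)/2 ≤ Real.log (2*d) := by
    have h1 : Real.log 2 ≤ Real.log (2*d) := Real.log_le_log (by norm_num) (by linarith)
    have h2 : (0.6931471803:ℝ) < Real.log 2 := Real.log_two_gt_d9
    linarith
  set t := Nat.ceil (Real.log (2*d) / (1 - μ)) with htdef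
  have ht1 : 1 ≤ t := Nat.one_le_iff_ne_zero.2 (by
    have := Nat.ceil_pos.2 (div_pos hlog h1μ)
    omega)
  have htub : (t:ℝ) ≤ Real.log (2*d)/(1-μ) + 1 :=
    le_of_lt (Nat.ceil_lt_add_one (le_of_lt (div_pos hlog h1μ)))
  have hcontr : μ^t ≤ 1/(2*d) := by
    have e1 : μ ≤ Real.exp (-(1-μ)) := by
      have := Real.add_one_le_exp (-(1-μ))
      linarith
    have e2 : μ^t ≤ Real.exp (-(1-μ))^t := pow_le_pow_left₀ hμ0 e1 t
    have e3 : Real.exp (-(1-μ))^t = Real.exp (-((t:ℝ)*(1-μ))) := by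
      rw [← Real.exp_nat_mul]; ring_nf
    have e4 : Real.log (2*d) ≤ (t:ℝ)*(1-μ) := by
      have hc := Nat.le_ceil (Real.log (2*d) / (1 - μ))
      have := mul_le_mul_of_nonneg_right hc h1μ.le
      rw [div_mul_cancel₀ _ (ne_of_gt h1μ)] at this
      exact this
    have e5 : Real.exp (-((t:ℝ)*(1-μ))) ≤ Real.exp (-(Real.log (2*d))) :=
      Real.exp_le_exp.2 (by linarith)
    have e6 : Real.exp (-Real.log (2*d)) = 1/(2*d) := by
      rw [Real.exp_neg, Real.exp_log (by linarith)]
      rw [one_div]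
    rw [e3] at e2
    rw [e6] at e5
    linarith
  have hd0 : (0:ℝ) < d := by linarith
  have hμt : d^2 * μ^(2*t) ≤ 1/4 := by
    have h1 : μ^(2*t) = (μ^t)^2 := by rw [← pow_mul, mul_comm]
    have h2 : (μ^t)^2 ≤ (1/(2*d))^2 := pow_le_pow_left₀ (by positivity) hcontr 2
    have h3 : d^2 * (1/(2*d))^2 = 1/4 := by field_simp; ring
    calc d^2 * μ^(2*t) = d^2 * (μ^t)^2 := by rw [h1]
      _ ≤ d^2 * (1/(2*d))^2 := mul_le_mul_of_nonneg_left h2 (by positivity)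
      _ = 1/4 := h3
  -- the main pointwise inequality
  have hmain : ∀ x : Fin n → X,
      ∑ i, ∑ j, π i * π j * ‖x i - x j‖ ^ 2 ≤
        (8*(t:ℝ)^2) * ∑ i, ∑ j, π i * A i j * ‖x i - x j‖ ^ 2 := by
    intro x
    set W := myLazy A ^ t with hW
    have hW0' : ∀ i j, 0 ≤ W i j := by rw [hW]; exact myLazyPow_nonneg hA0 t
    have hW1' : ∀ i, ∑ j, W i j = 1 := by rw [hW]; exact myLazyPow_rowsum hA0 hA1 t
    set xb := ∑ j, π j • x j with hxb
    set y := fun i => ∑ j, W i j • x j with hy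
    set Sig := ∑ i, π i * ‖x i - xb‖^2 with hSig
    set Pq := ∑ i, π i * ‖x i - y i‖^2 with hPq
    set Qq := ∑ i, π i * ‖y i - xb‖^2 with hQq
    set Et := ∑ i, ∑ j, π i * W i j * ‖x i - x j‖^2 with hEt
    set EB := ∑ i, ∑ j, π i * myLazy A i j * ‖x i - x j‖^2 with hEB
    set EA := ∑ i, ∑ j, π i * A i j * ‖x i - x j‖^2 with hEA
    have hSignn : 0 ≤ Sig := Finset.sum_nonneg fun i _ =>
      mul_nonneg (hπ i).le (sq_nonneg _)
    have hPqnn : 0 ≤ Pq := Finset.sum_nonneg fun i _ =>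
      mul_nonneg (hπ i).le (sq_nonneg _)
    -- (a) Φ ≤ 4 Sig
    have ha : ∑ i, ∑ j, π i * π j * ‖x i - x j‖ ^ 2 ≤ 4 * Sig := by
      have hpt : ∀ i j : Fin n, π i * π j * ‖x i - x j‖^2
          ≤ π i * π j * (2*‖x i - xb‖^2) + π i * π j * (2*‖x j - xb‖^2) := by
        intro i j
        have htr : ‖x i - x j‖ ≤ ‖x i - xb‖ + ‖x j - xb‖ := by
          have h := dist_triangle (x i) xb (x j)
          rw [dist_eq_norm, dist_eq_norm, dist_eq_norm] at h
          rw [show ‖xb - x j‖ = ‖x j - xb‖ from norm_sub_rev _ _] at h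
          exact h
        have hsq : ‖x i - x j‖^2 ≤ (‖x i - xb‖ + ‖x j - xb‖)^2 :=
          pow_le_pow_left₀ (norm_nonneg _) htr 2
        have hw : 0 ≤ π i * π j := mul_nonneg (hπ i).le (hπ j).le
        nlinarith [mul_le_mul_of_nonneg_left hsq hw, sq_nonneg (‖x i - xb‖ - ‖x j - xb‖)]
      have e1 : ∑ i, ∑ j, (π i * π j * (2*‖x i - xb‖^2)) = 2 * Sig := by
        rw [Finset.mul_sum]
        refine Finset.sum_congr rfl fun i _ => ?_
        calc ∑ j, π i * π j * (2*‖x i - xb‖^2)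
            = (π i * (2*‖x i - xb‖^2)) * ∑ j, π j := by
              rw [Finset.mul_sum]
              exact Finset.sum_congr rfl fun j _ => by ring
          _ = 2 * (π i * ‖x i - xb‖^2) := by rw [hπ1]; ring
      have e2 : ∑ i, ∑ j, (π i * π j * (2*‖x j - xb‖^2)) = 2 * Sig := by
        rw [Finset.sum_comm, Finset.mul_sum]
        refine Finset.sum_congr rfl fun j _ => ?_
        calc ∑ i, π i * π j * (2*‖x j - xb‖^2)
            = (π j * (2*‖x j - xb‖^2)) * ∑ i, π i := by
              rw [Finset.mul_sum]
              exact Finset.sum_congr rfl fun i _ => by ring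
          _ = 2 * (π j * ‖x j - xb‖^2) := by rw [hπ1]; ring
      calc ∑ i, ∑ j, π i * π j * ‖x i - x j‖ ^ 2
          ≤ ∑ i, ∑ j, (π i * π j * (2*‖x i - xb‖^2) + π i * π j * (2*‖x j - xb‖^2)) :=
            Finset.sum_le_sum fun i _ => Finset.sum_le_sum fun j _ => hpt i j
        _ = 2 * Sig + 2 * Sig := by
            simp only [Finset.sum_add_distrib]
            rw [e1, e2]
        _ = 4 * Sig := by ring
    -- (b) Sig ≤ 2 Pq + 2 Qq
    have hb : Sig ≤ 2 * Pq + 2 * Qq := by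
      have hpt : ∀ i : Fin n, π i * ‖x i - xb‖^2
          ≤ π i * (2*‖x i - y i‖^2) + π i * (2*‖y i - xb‖^2) := by
        intro i
        have htr : ‖x i - xb‖ ≤ ‖x i - y i‖ + ‖y i - xb‖ := by
          have h := dist_triangle (x i) (y i) xb
          rw [dist_eq_norm, dist_eq_norm, dist_eq_norm] at h
          exact h
        have hsq : ‖x i - xb‖^2 ≤ (‖x i - y i‖ + ‖y i - xb‖)^2 :=
          pow_le_pow_left₀ (norm_nonneg _) htr 2
        nlinarith [mul_le_mul_of_nonneg_left hsq (hπ i).le,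
          mul_nonneg (hπ i).le (sq_nonneg (‖x i - y i‖ - ‖y i - xb‖))]
      calc Sig ≤ ∑ i, (π i * (2*‖x i - y i‖^2) + π i * (2*‖y i - xb‖^2)) :=
            Finset.sum_le_sum fun i _ => hpt i
        _ = 2 * Pq + 2 * Qq := by
            rw [Finset.sum_add_distrib, hPq, hQq, Finset.mul_sum, Finset.mul_sum]
            congr 1
            · exact Finset.sum_congr rfl fun i _ => by ring
            · exact Finset.sum_congr rfl fun i _ => by ring
    -- (c) Qq ≤ d² μ^{2t} Sig
    have hc : Qq ≤ d^2 * μ^(2*t) * Sig := by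
      set v : Fin n → H := fun j => T (x j - xb) with hv
      have hvmean : ∑ j, π j • v j = 0 := by
        have e1 : ∑ j, π j • (x j - xb) = 0 := by
          simp only [smul_sub]
          rw [Finset.sum_sub_distrib, ← Finset.sum_smul, hπ1, one_smul, ← hxb, sub_self]
        calc ∑ j, π j • v j = ∑ j, T (π j • (x j - xb)) := by
              refine Finset.sum_congr rfl fun j _ => ?_
              rw [hv, map_smul]
          _ = T (∑ j, π j • (x j - xb)) := (map_sum T _ _).symm
          _ = 0 := by rw [e1, map_zero]
      have hTy : ∀ i, T (y i - xb) = ∑ j, W i j • v j := by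
        intro i
        have e1 : y i - xb = ∑ j, W i j • (x j - xb) := by
          simp only [hy, smul_sub]
          rw [Finset.sum_sub_distrib, ← Finset.sum_smul, hW1' i, one_smul]
        rw [e1, map_sum]
        refine Finset.sum_congr rfl fun j _ => ?_
        rw [map_smul]
      have step1 : Qq ≤ d^2 * ∑ i, π i * ‖∑ j, W i j • v j‖^2 := by
        rw [Finset.mul_sum]
        refine Finset.sum_le_sum fun i _ => ?_
        have h1 : ‖y i - xb‖ ≤ d * ‖T (y i - xb)‖ := (hT (y i - xb)).2
        rw [hTy i] at h1
        have h2 : ‖y i - xb‖^2 ≤ (d * ‖∑ j, W i j • v j‖)^2 :=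
          pow_le_pow_left₀ (norm_nonneg _) h1 2
        calc π i * ‖y i - xb‖^2 ≤ π i * (d * ‖∑ j, W i j • v j‖)^2 :=
              mul_le_mul_of_nonneg_left h2 (hπ i).le
          _ = d^2 * (π i * ‖∑ j, W i j • v j‖^2) := by ring
      have step2 : ∑ i, π i * ‖∑ j, W i j • v j‖^2 ≤ μ^(2*t) * ∑ i, π i * ‖v i‖^2 :=
        my_contract_pow_H hA0 hA1 hrev hπ t v hvmean
      have step3 : ∑ i, π i * ‖v i‖^2 ≤ Sig := by
        refine Finset.sum_le_sum fun i _ => ?_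
        have h1 : ‖v i‖ ≤ ‖x i - xb‖ := (hT (x i - xb)).1
        have h2 : ‖v i‖^2 ≤ ‖x i - xb‖^2 := pow_le_pow_left₀ (norm_nonneg _) h1 2
        exact mul_le_mul_of_nonneg_left h2 (hπ i).le
      calc Qq ≤ d^2 * ∑ i, π i * ‖∑ j, W i j • v j‖^2 := step1
        _ ≤ d^2 * (μ^(2*t) * ∑ i, π i * ‖v i‖^2) :=
            mul_le_mul_of_nonneg_left step2 (by positivity)
        _ ≤ d^2 * (μ^(2*t) * Sig) := by
            refine mul_le_mul_of_nonneg_left ?_ (by positivity)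
            exact mul_le_mul_of_nonneg_left step3 (by positivity)
        _ = d^2 * μ^(2*t) * Sig := by ring
    -- (d) Sig ≤ 4 Pq
    have hd4 : Sig ≤ 4 * Pq := by
      have h1 : d^2 * μ^(2*t) * Sig ≤ (1/4) * Sig :=
        mul_le_mul_of_nonneg_right hμt hSignn
      linarith [hb, hc]
    -- (e) Pq ≤ Et
    have he : Pq ≤ Et := by
      refine Finset.sum_le_sum fun i _ => ?_
      have e1 : x i - y i = ∑ j, W i j • (x i - x j) := by
        simp only [hy, smul_sub]
        rw [Finset.sum_sub_distrib, ← Finset.sum_smul, hW1' i, one_smul]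
      have hj := my_jensen (fun j => W i j) (fun j => hW0' i j)
        (hW1' i) (fun j => x i - x j)
      rw [← e1] at hj
      calc π i * ‖x i - y i‖^2 ≤ π i * ∑ j, W i j * ‖x i - x j‖^2 :=
            mul_le_mul_of_nonneg_left hj (hπ i).le
        _ = ∑ j, π i * W i j * ‖x i - x j‖^2 := by
            rw [Finset.mul_sum]
            exact Finset.sum_congr rfl fun j _ => by ring
    -- (f) Et ≤ t² EB
    have hf : Et ≤ (t:ℝ)^2 * EB := by
      have h1 := my_E_pow (X := X) (fun i => (hπ i).le) hA0 hA1 hrev t x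
      have hEtnn : 0 ≤ Et := my_E_nonneg (fun i => (hπ i).le) (myLazyPow_nonneg hA0 t) x
      have hEBnn : 0 ≤ EB := my_E_nonneg (fun i => (hπ i).le) (myLazy_nonneg hA0) x
      have h2 : Real.sqrt Et ≤ (t:ℝ) * Real.sqrt EB := h1
      calc Et = Real.sqrt Et ^ 2 := (Real.sq_sqrt hEtnn).symm
        _ ≤ ((t:ℝ) * Real.sqrt EB)^2 :=
            pow_le_pow_left₀ (Real.sqrt_nonneg _) h2 2
        _ = (t:ℝ)^2 * EB := by
            rw [mul_pow, Real.sq_sqrt hEBnn]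
    -- (g) EB = EA / 2
    have hg : EB = EA / 2 := my_EB_half x
    calc ∑ i, ∑ j, π i * π j * ‖x i - x j‖ ^ 2
        ≤ 4 * Sig := ha
      _ ≤ 16 * Pq := by linarith
      _ ≤ 16 * Et := by linarith
      _ ≤ 16 * ((t:ℝ)^2 * EB) := by linarith
      _ = 8 * (t:ℝ)^2 * EA := by rw [hg]; ring
  -- conclude from membership in the defining set
  have hmem : (8*(t:ℝ)^2) ∈ {γ : ℝ | 0 < γ ∧ ∀ x : Fin n → X,
      ∑ i, ∑ j, π i * π j * ‖x i - x j‖ ^ 2 ≤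
        γ * ∑ i, ∑ j, π i * A i j * ‖x i - x j‖ ^ 2} := by
    constructor
    · have : (1:ℝ) ≤ (t:ℝ) := by exact_mod_cast ht1
      positivity
    · exact hmain
  have hbdd : BddBelow {γ : ℝ | 0 < γ ∧ ∀ x : Fin n → X,
      ∑ i, ∑ j, π i * π j * ‖x i - x j‖ ^ 2 ≤
        γ * ∑ i, ∑ j, π i * A i j * ‖x i - x j‖ ^ 2} :=
    ⟨0, fun γ hγ => hγ.1.le⟩
  have hinf : nonlinearSpectralGapSq n π A X ≤ 8*(t:ℝ)^2 := csInf_le hbdd hmem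
  have ht8 : Real.sqrt (8*(t:ℝ)^2) ≤ 3*(t:ℝ) := by
    have h1 : (8:ℝ)*(t:ℝ)^2 ≤ (3*(t:ℝ))^2 := by nlinarith [sq_nonneg (t:ℝ)]
    calc Real.sqrt (8*(t:ℝ)^2) ≤ Real.sqrt ((3*(t:ℝ))^2) := Real.sqrt_le_sqrt h1
      _ = 3*(t:ℝ) := Real.sqrt_sq (by positivity)
  have hδ : 0 < 1 - lam := by linarith
  have htfin : 3*(t:ℝ) ≤ 18 * Real.log (2*d) / (1 - lam) := by
    have h1μeq : 1 - μ = (1 - lam)/2 := by rw [hμdef]; ring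
    set q := Real.log (2*d) / (1-lam) with hq
    have e1 : Real.log (2*d)/(1-μ) = 2*q := by
      rw [h1μeq, hq, div_div_eq_mul_div]
      ring
    have e2 : (1:ℝ) ≤ 4*q := by
      have h4 : 4*q = (4*Real.log (2*d))/(1-lam) := by rw [hq]; ring
      rw [h4, le_div_iff₀ hδ]
      linarith
    have e3 : (t:ℝ) ≤ 2*q + 1 := by rw [← e1]; exact htub
    have egoal : 18 * Real.log (2*d) / (1 - lam) = 18*q := by rw [hq]; ring
    rw [egoal]
    linarith
  calc Real.sqrt (nonlinearSpectralGapSq n π A X)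
      ≤ Real.sqrt (8*(t:ℝ)^2) := Real.sqrt_le_sqrt hinf
    _ ≤ 3*(t:ℝ) := ht8
    _ ≤ 18 * Real.log (2*d) / (1 - lam) := htfin
end
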